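/- arXiv:1609.07918 — 6 statements merged into one kernel-verified Lean document; each statement's English description precedes it below -/
import Mathlib

section
/- Let N : (0,∞) → ℝ be locally integrable, let T > 0, let n be a positive integer, and let z : [0,∞) → ℝ be locally absolutely continuous with z(0) = 1 and z'(t) = −n² ∫₀^t N(t−s) z(s) ds for almost every t. Assume N is of positive type on [0,T], i.e. ∫₀^t w(s) (∫₀^s N(s−r) w(r) dr) ds ≥ 0 for every continuous w : [0,T] → ℝ and every t ∈ [0,T]. Then |z(t)| ≤ 1 for every t ∈ [0,T]. -/
open MeasureTheory Set

/-- Integrability of (primitive) × f on `Ioc 0 t`. -/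
private lemma prim_mul_integrable (f : ℝ → ℝ) {t : ℝ} (ht : 0 ≤ t)
    (hf : IntegrableOn f (Ioc 0 t)) :
    IntegrableOn (fun s => (∫ r in Ioc (0:ℝ) s, f r) * f s) (Ioc 0 t) := by
  have hIcc : IntegrableOn f (Icc 0 t) := (integrableOn_Icc_iff_integrableOn_Ioc).2 hf
  have hBc : ContinuousOn (fun x => ∫ r in Ioc (0:ℝ) x, f r) (Icc 0 t) :=
    intervalIntegral.continuousOn_primitive hIcc
  obtain ⟨M, hM⟩ := isCompact_Icc.exists_bound_of_continuousOn hBc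
  refine Integrable.bdd_mul (c := M) hf ?_ ?_
  · exact (hBc.aestronglyMeasurable measurableSet_Icc).mono_measure
      (Measure.restrict_mono Ioc_subset_Icc_self le_rfl)
  · refine (ae_restrict_iff' measurableSet_Ioc).2 (ae_of_all _ fun x hx => ?_)
    exact hM x (Ioc_subset_Icc_self hx)

/-- Symmetrization: `∫₀ᵗ (∫₀ˢ f) f(s) ds = (∫₀ᵗ f)² / 2`. -/
private lemma sym_half (f : ℝ → ℝ) {t : ℝ} (ht : 0 ≤ t)
    (hf : IntegrableOn f (Ioc 0 t)) :
    ∫ s in Ioc (0:ℝ) t, (∫ r in Ioc (0:ℝ) s, f r) * f s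
      = (∫ s in Ioc (0:ℝ) t, f s) ^ 2 / 2 := by
  set g : ℝ → ℝ := (Ioc (0:ℝ) t).indicator f with hgdef
  have hg : Integrable g := (integrable_indicator_iff measurableSet_Ioc).2 hf
  set A : ℝ := ∫ s in Ioc (0:ℝ) t, f s with hA
  set H : ℝ := ∫ s in Ioc (0:ℝ) t, (∫ r in Ioc (0:ℝ) s, f r) * f s with hH
  have hS : MeasurableSet {p : ℝ × ℝ | p.2 ≤ p.1} :=
    measurableSet_le measurable_snd measurable_fst
  set F : ℝ → ℝ → ℝ :=
    fun s r => ({p : ℝ × ℝ | p.2 ≤ p.1}).indicator (fun q => g q.1 * g q.2) (s, r) with hF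
  have hFI : Integrable (Function.uncurry F) (volume.prod volume) := by
    have h1 : Integrable (fun q : ℝ × ℝ => g q.1 * g q.2) (volume.prod volume) :=
      hg.mul_prod hg
    have h2 : Integrable
        (({p : ℝ × ℝ | p.2 ≤ p.1}).indicator (fun q : ℝ × ℝ => g q.1 * g q.2))
        (volume.prod volume) := (integrable_indicator_iff hS).2 h1.integrableOn
    exact h2
  have swap := MeasureTheory.integral_integral_swap hFI
  -- pointwise descriptions of inner integrals
  have key1 : ∀ s : ℝ, (∫ r, F s r) = g s * ∫ r in Iic s, g r := by
    intro s
    have he : (fun r => F s r) = (Iic s).indicator (fun r => g s * g r) := by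
      funext r
      by_cases h : r ≤ s
      · simp only [hF]
        rw [Set.indicator_of_mem (show (s, r) ∈ {p : ℝ × ℝ | p.2 ≤ p.1} from h),
          Set.indicator_of_mem (show r ∈ Iic s from h)]
      · simp only [hF]
        rw [Set.indicator_of_notMem (show (s, r) ∉ {p : ℝ × ℝ | p.2 ≤ p.1} from h),
          Set.indicator_of_notMem (show r ∉ Iic s from h)]
    rw [he, integral_indicator measurableSet_Iic, integral_const_mul]
  have key2 : ∀ r : ℝ, (∫ s, F s r) = (∫ s in Ici r, g s) * g r := by
    intro r
    have he : (fun s => F s r) = (Ici r).indicator (fun s => g s * g r) := by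
      funext s
      by_cases h : r ≤ s
      · simp only [hF]
        rw [Set.indicator_of_mem (show (s, r) ∈ {p : ℝ × ℝ | p.2 ≤ p.1} from h),
          Set.indicator_of_mem (show s ∈ Ici r from h)]
      · simp only [hF]
        rw [Set.indicator_of_notMem (show (s, r) ∉ {p : ℝ × ℝ | p.2 ≤ p.1} from h),
          Set.indicator_of_notMem (show s ∉ Ici r from h)]
    rw [he, integral_indicator measurableSet_Ici, integral_mul_const]
  -- LHS of Fubini equals H
  have left : (∫ s, ∫ r, F s r) = H := by
    have e1 : (fun s => ∫ r, F s r)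
        = (Ioc (0:ℝ) t).indicator (fun s => (∫ r in Iic s, g r) * f s) := by
      funext s
      rw [key1]
      by_cases hs : s ∈ Ioc (0:ℝ) t
      · rw [Set.indicator_of_mem hs, hgdef, Set.indicator_of_mem hs, mul_comm]
      · rw [Set.indicator_of_notMem hs, hgdef, Set.indicator_of_notMem hs, zero_mul]
    rw [e1, integral_indicator measurableSet_Ioc]
    refine setIntegral_congr_fun measurableSet_Ioc fun s hs => ?_
    have hset : Iic s ∩ Ioc (0:ℝ) t = Ioc (0:ℝ) s := by
      ext r
      simp only [mem_inter_iff, mem_Iic, mem_Ioc]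
      exact ⟨fun ⟨h1, h2, _⟩ => ⟨h2, h1⟩, fun ⟨h1, h2⟩ => ⟨h2, h1, h2.trans hs.2⟩⟩
    rw [hgdef, setIntegral_indicator measurableSet_Ioc, hset]
  -- RHS of Fubini equals A*A - H
  have right : (∫ r, ∫ s, F s r) = A * A - H := by
    have e1 : (fun r => ∫ s, F s r)
        = (Ioc (0:ℝ) t).indicator (fun r => (∫ s in Ici r, g s) * f r) := by
      funext r
      rw [key2]
      by_cases hr : r ∈ Ioc (0:ℝ) t
      · rw [Set.indicator_of_mem hr, hgdef, Set.indicator_of_mem hr]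
      · rw [Set.indicator_of_notMem hr, hgdef, Set.indicator_of_notMem hr, mul_zero]
    rw [e1, integral_indicator measurableSet_Ioc]
    have e2 : ∀ r ∈ Ioc (0:ℝ) t,
        (∫ s in Ici r, g s) * f r = (A - ∫ x in Ioc (0:ℝ) r, f x) * f r := by
      intro r hr
      congr 1
      have h1 : ∫ s in Ici r, g s = ∫ s in Ioc r t, f s := by
        have hset : Ici r ∩ Ioc (0:ℝ) t = Icc r t := by
          ext s
          simp only [mem_inter_iff, mem_Ici, mem_Ioc, mem_Icc]
          exact ⟨fun ⟨h1, _, h3⟩ => ⟨h1, h3⟩, fun ⟨h1, h2⟩ => ⟨h1, hr.1.trans_le h1, h2⟩⟩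
        rw [hgdef, setIntegral_indicator measurableSet_Ioc, hset, integral_Icc_eq_integral_Ioc]
      have h2 : A = (∫ x in Ioc (0:ℝ) r, f x) + ∫ s in Ioc r t, f s := by
        rw [hA, ← setIntegral_union (Set.Ioc_disjoint_Ioc_of_le le_rfl) measurableSet_Ioc
          (hf.mono_set (Ioc_subset_Ioc_right hr.2)) (hf.mono_set (Ioc_subset_Ioc_left hr.1.le)),
          Set.Ioc_union_Ioc_eq_Ioc hr.1.le hr.2]
      rw [h1]
      linarith
    rw [setIntegral_congr_fun measurableSet_Ioc e2]
    have hint1 : IntegrableOn (fun r => A * f r) (Ioc (0:ℝ) t) := hf.const_mul A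
    have hint2 : IntegrableOn (fun r => (∫ x in Ioc (0:ℝ) r, f x) * f r) (Ioc (0:ℝ) t) :=
      prim_mul_integrable f ht hf
    have : ∀ r, (A - ∫ x in Ioc (0:ℝ) r, f x) * f r
        = A * f r - (∫ x in Ioc (0:ℝ) r, f x) * f r := fun r => by ring
    simp_rw [this]
    rw [integral_sub hint1 hint2, integral_const_mul]
  rw [left, right] at swap
  rw [hH] at swap ⊢
  nlinarith [swap]

/-- If `N` is locally integrable on `(0,∞)` and of positive type on `[0,T]`,
and `z` is locally absolutely continuous with `z(0) = 1` and
`z'(t) = −n² ∫₀^t N(t−s) z(s) ds` a.e., then `|z(t)| ≤ 1` on `[0,T]`. -/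
theorem solution_bounded_of_positive_type (N z z' : ℝ → ℝ) (T : ℝ) (hT : 0 < T)
    (n : ℕ) (hn : 0 < n)
    (hNloc : ∀ S : ℝ, 0 < S → IntegrableOn N (Ioc 0 S))
    (hz'loc : ∀ S : ℝ, 0 < S → IntegrableOn z' (Ioc 0 S))
    (hz0 : z 0 = 1)
    (hrep : ∀ t : ℝ, 0 ≤ t → z t = 1 + ∫ s in (0 : ℝ)..t, z' s)
    (heq : ∀ᵐ t ∂(volume.restrict (Ioi (0 : ℝ))),
      z' t = -(n : ℝ) ^ 2 * ∫ s in (0 : ℝ)..t, N (t - s) * z s)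
    (hpos : ∀ w : ℝ → ℝ, ContinuousOn w (Icc 0 T) → ∀ t ∈ Icc (0 : ℝ) T,
      0 ≤ ∫ s in (0 : ℝ)..t, w s * ∫ r in (0 : ℝ)..s, N (s - r) * w r) :
    ∀ t ∈ Icc (0 : ℝ) T, |z t| ≤ 1 := by
  have hz'T : IntegrableOn z' (Ioc 0 T) := hz'loc T hT
  -- continuity of z on [0,T]
  have hcz : ContinuousOn z (Icc 0 T) := by
    have h1 : ContinuousOn (fun x => 1 + ∫ s in Ioc (0:ℝ) x, z' s) (Icc 0 T) :=
      continuousOn_const.add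
        (intervalIntegral.continuousOn_primitive ((integrableOn_Icc_iff_integrableOn_Ioc).2 hz'T))
    refine h1.congr fun x hx => ?_
    rw [hrep x hx.1, intervalIntegral.integral_of_le hx.1]
  intro t htmem
  obtain ⟨ht0, htT⟩ := htmem
  have hz't : IntegrableOn z' (Ioc 0 t) := hz'T.mono_set (Ioc_subset_Ioc_right htT)
  set A : ℝ := ∫ s in Ioc (0:ℝ) t, z' s with hA
  have hzt : z t = 1 + A := by
    rw [hrep t ht0, intervalIntegral.integral_of_le ht0]
  -- energy identity
  have hsplit : ∫ s in Ioc (0:ℝ) t, z s * z' s = A + A ^ 2 / 2 := by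
    have e1 : ∀ s ∈ Ioc (0:ℝ) t,
        z s * z' s = z' s + (∫ r in Ioc (0:ℝ) s, z' r) * z' s := by
      intro s hs
      rw [hrep s hs.1.le, intervalIntegral.integral_of_le hs.1.le]
      ring
    rw [setIntegral_congr_fun measurableSet_Ioc e1,
      integral_add hz't (prim_mul_integrable z' ht0 hz't),
      sym_half z' ht0 hz't]
  -- substitute the equation a.e.
  have hae : ∀ᵐ s ∂(volume.restrict (Ioc (0:ℝ) t)),
      z' s = -(n : ℝ) ^ 2 * ∫ r in (0:ℝ)..s, N (s - r) * z r :=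
    ae_mono (Measure.restrict_mono Ioc_subset_Ioi_self le_rfl) heq
  have hsub : ∫ s in Ioc (0:ℝ) t, z s * z' s
      = -(n : ℝ) ^ 2 * ∫ s in Ioc (0:ℝ) t, z s * ∫ r in (0:ℝ)..s, N (s - r) * z r := by
    rw [← integral_const_mul]
    refine integral_congr_ae ?_
    filter_upwards [hae] with s hs
    rw [hs]; ring
  -- positivity
  have hP : 0 ≤ ∫ s in Ioc (0:ℝ) t, z s * ∫ r in (0:ℝ)..s, N (s - r) * z r := by
    have := hpos z hcz t ⟨ht0, htT⟩
    rwa [intervalIntegral.integral_of_le ht0] at this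
  have hfinal : z t ^ 2 - 1 ≤ 0 := by
    have h1 : z t ^ 2 - 1 = 2 * ∫ s in Ioc (0:ℝ) t, z s * z' s := by
      rw [hsplit, hzt]; ring
    rw [h1, hsub]
    nlinarith [sq_nonneg (n : ℝ)]
  nlinarith [abs_nonneg (z t), sq_abs (z t)]
end

section
/- Let α > 0, γ ∈ (0,1), σ > 0, β > 0, δ ∈ (0, π/2), and let N₁ : ℂ → ℂ be such that |N₁(β+iω)| < α·|β+iω|^σ for every ω ∈ ℝ. Define ζ(λ) = λ^(1+γ)/(α + N₁(λ)·λ^(−σ)) (principal branch powers) and R(ω) = |ζ(β+iω)|. Let n be a positive integer with n² > (2α)^(1/γ)/cos δ, and let ω ≥ n² cos δ. Then: (ii) R(ω) > n² cos δ; and (iii) (R(ω) − n² cos δ)² ≥ ((1/(2α))·ω^(1+γ) − n² cos δ)², where moreover (1/(2α))·ω^(1+γ) − n² cos δ > 0. -/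
open Complex

/-- Lemma on the modulus `R(ω) = |ζ(β+iω)|` of
`ζ(λ) = λ^(1+γ)/(α + N₁(λ) λ^(−σ))`: if `|N₁(β+iω)| < α |β+iω|^σ`,
`n² > (2α)^(1/γ)/cos δ` and `ω ≥ n² cos δ`, then `R(ω) > n² cos δ` and
`(R(ω) − n² cos δ)² ≥ ((1/(2α)) ω^(1+γ) − n² cos δ)²`, with
`(1/(2α)) ω^(1+γ) − n² cos δ > 0`. -/
theorem modulus_estimates (α γ σ β δ : ℝ) (N₁ : ℂ → ℂ)
    (hα : 0 < α) (hγ : γ ∈ Set.Ioo (0 : ℝ) 1) (hσ : 0 < σ) (hβ : 0 < β)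
    (hδ : δ ∈ Set.Ioo 0 (Real.pi / 2))
    (hN₁ : ∀ ω : ℝ, ‖N₁ ((β : ℂ) + ω * Complex.I)‖
      < α * ‖(β : ℂ) + ω * Complex.I‖ ^ σ)
    (n : ℕ) (hn1 : 0 < n) (hn : (2 * α) ^ (1 / γ) / Real.cos δ < (n : ℝ) ^ 2)
    (ω : ℝ) (hω : (n : ℝ) ^ 2 * Real.cos δ ≤ ω) :
    (n : ℝ) ^ 2 * Real.cos δ
        < ‖(((β : ℂ) + ω * Complex.I) ^ ((1 : ℂ) + (γ : ℂ))
            / ((α : ℂ) + N₁ ((β : ℂ) + ω * Complex.I)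
                * ((β : ℂ) + ω * Complex.I) ^ (-(σ : ℂ))))‖ ∧
      (1 / (2 * α) * ω ^ (1 + γ) - (n : ℝ) ^ 2 * Real.cos δ) ^ 2
        ≤ (‖(((β : ℂ) + ω * Complex.I) ^ ((1 : ℂ) + (γ : ℂ))
            / ((α : ℂ) + N₁ ((β : ℂ) + ω * Complex.I)
                * ((β : ℂ) + ω * Complex.I) ^ (-(σ : ℂ))))‖
          - (n : ℝ) ^ 2 * Real.cos δ) ^ 2 ∧
      0 < 1 / (2 * α) * ω ^ (1 + γ) - (n : ℝ) ^ 2 * Real.cos δ := by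
  obtain ⟨hγ0, hγ1⟩ := hγ
  obtain ⟨hδ0, hδ1⟩ := hδ
  have hcos : 0 < Real.cos δ :=
    Real.cos_pos_of_mem_Ioo ⟨by linarith [Real.pi_pos], hδ1⟩
  set c : ℝ := (n : ℝ) ^ 2 * Real.cos δ with hc_def
  have hnpos : (0:ℝ) < (n : ℝ) ^ 2 := by positivity
  have hc : 0 < c := by positivity
  have hc2 : (2 * α) ^ (1 / γ) < c := (div_lt_iff₀ hcos).mp hn
  have hωpos : 0 < ω := lt_of_lt_of_le hc hω
  set lam : ℂ := (β : ℂ) + ω * Complex.I with hlam_def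
  have hlam_re : lam.re = β := by simp [hlam_def]
  have hlam_ne : lam ≠ 0 := by
    intro h
    rw [h] at hlam_re
    simp at hlam_re
    linarith
  have habs : 0 < ‖lam‖ := norm_pos_iff.mpr hlam_ne
  have hωle : ω ≤ ‖lam‖ := by
    calc ω ≤ |ω| := le_abs_self ω
    _ ≤ ‖lam‖ := by
        simpa [hlam_def] using Complex.abs_im_le_norm lam
  have hnum : ‖lam ^ ((1 : ℂ) + (γ : ℂ))‖
      = ‖lam‖ ^ (1 + γ) := by
    rw [show (1 : ℂ) + (γ : ℂ) = ((1 + γ : ℝ) : ℂ) by push_cast; ring,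
      Complex.norm_cpow_real]
  have hpow : ‖lam ^ (-(σ : ℂ))‖ = ‖lam‖ ^ (-σ) := by
    rw [show -(σ : ℂ) = ((-σ : ℝ) : ℂ) by push_cast; ring,
      Complex.norm_cpow_real]
  set rest : ℂ := N₁ lam * lam ^ (-(σ : ℂ)) with hrest_def
  have habs_rest : ‖rest‖ < α := by
    rw [hrest_def, norm_mul, hpow]
    calc ‖N₁ lam‖ * ‖lam‖ ^ (-σ)
        < (α * ‖lam‖ ^ σ) * ‖lam‖ ^ (-σ) :=
          mul_lt_mul_of_pos_right (hN₁ ω) (Real.rpow_pos_of_pos habs _)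
      _ = α := by
          rw [mul_assoc, ← Real.rpow_add habs]
          simp
  set D : ℂ := (α : ℂ) + rest with hD_def
  have habsα : ‖(α : ℂ)‖ = α := by
    rw [Complex.norm_real, Real.norm_eq_abs, abs_of_pos hα]
  have hD_lb : α - ‖rest‖ ≤ ‖D‖ := by
    have h1 : ‖(α : ℂ)‖ ≤ ‖D‖ + ‖rest‖ := by
      have h6 := norm_add_le D (-rest)
      rw [norm_neg,
        show D + (-rest) = (α : ℂ) by rw [hD_def]; ring] at h6
      exact h6
    rw [habsα] at h1
    linarith
  have hD_pos : 0 < ‖D‖ := by linarith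
  have hD_ub : ‖D‖ < 2 * α := by
    have h2 := norm_add_le (α : ℂ) rest
    rw [habsα] at h2
    rw [hD_def]
    linarith
  have hR : ‖lam ^ ((1 : ℂ) + (γ : ℂ)) / D‖
      = ‖lam‖ ^ (1 + γ) / ‖D‖ := by
    rw [norm_div, hnum]
  have h1 : ‖lam‖ ^ (1 + γ) / (2 * α)
      < ‖lam‖ ^ (1 + γ) / ‖D‖ :=
    div_lt_div_of_pos_left (Real.rpow_pos_of_pos habs _) hD_pos hD_ub
  have h2 : ω ^ (1 + γ) ≤ ‖lam‖ ^ (1 + γ) :=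
    Real.rpow_le_rpow hωpos.le hωle (by linarith)
  have h2α : (0:ℝ) < 2 * α := by linarith
  have hRgt : 1 / (2 * α) * ω ^ (1 + γ)
      < ‖lam ^ ((1 : ℂ) + (γ : ℂ)) / D‖ := by
    rw [hR]
    have heq : 1 / (2 * α) * ω ^ (1 + γ) = ω ^ (1 + γ) / (2 * α) := by ring
    have h3 : ω ^ (1 + γ) / (2 * α) ≤ ‖lam‖ ^ (1 + γ) / (2 * α) :=
      div_le_div_of_nonneg_right h2 h2α.le
    linarith
  have hA : c < 1 / (2 * α) * ω ^ (1 + γ) := by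
    have hcg : 2 * α < c ^ γ := by
      have h4 := Real.rpow_lt_rpow (by positivity) hc2 hγ0
      rwa [← Real.rpow_mul (by positivity), one_div,
        inv_mul_cancel₀ hγ0.ne', Real.rpow_one] at h4
    have hcc : c * (2 * α) < c ^ (1 + γ) := by
      have h7 : c ^ (1 + γ) = c * c ^ γ := by
        rw [Real.rpow_add hc, Real.rpow_one]
      rw [h7]
      exact mul_lt_mul_of_pos_left hcg hc
    have hωc : c ^ (1 + γ) ≤ ω ^ (1 + γ) :=
      Real.rpow_le_rpow hc.le hω (by linarith)
    have h5 : c < ω ^ (1 + γ) / (2 * α) := (lt_div_iff₀ h2α).mpr (by linarith)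
    have heq : 1 / (2 * α) * ω ^ (1 + γ) = ω ^ (1 + γ) / (2 * α) := by ring
    linarith
  refine ⟨by linarith, ?_, by linarith⟩
  have h0 : 0 ≤ 1 / (2 * α) * ω ^ (1 + γ) - c := by linarith
  have hle : 1 / (2 * α) * ω ^ (1 + γ) - c
      ≤ ‖lam ^ ((1 : ℂ) + (γ : ℂ)) / D‖ - c := by linarith
  exact pow_le_pow_left₀ h0 hle 2
end

section
/- Let α > 0, γ ∈ (0,1), σ > 0, β > 0, δ ∈ (0, π/2), and let N₁ : ℂ → ℂ satisfy |N₁(β+iω)| < α·|β+iω|^σ for every ω ∈ ℝ. Define ζ(λ) = λ^(1+γ)/(α + N₁(λ)·λ^(−σ)). Let n be a positive integer with n² > (2α)^(1/γ)/cos δ, and let ω ≥ n² cos δ be such that Re ζ(β+iω) ≥ −|ζ(β+iω)| cos δ. Then |n² + ζ(β+iω)|² ≥ ((1/(2α))·ω^(1+γ) − n² cos δ)² + n⁴ sin²δ. -/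
open Complex

lemma key_aux (m u v r R c co si : ℝ) (h1 : u^2 + v^2 = r^2) (h2 : si^2 + co^2 = 1)
    (hc : c = m * co) (hs : -(r * co) ≤ u) (hRr : R ≤ r) (hcR : c < R) (hm : 0 ≤ m) :
    (R - c)^2 + m^2 * si^2 ≤ (m + u)^2 + v^2 := by
  have t1 : 0 ≤ (r - R) * (r + R - 2*c) := mul_nonneg (by linarith) (by linarith)
  have t2 : 0 ≤ 2 * m * (u + r * co) := mul_nonneg (by linarith) (by linarith)
  nlinarith [t1, t2]

/-- Key lower bound used for the tail integral: with
`ζ(λ) = λ^(1+γ)/(α + N₁(λ) λ^(−σ))`, if `|N₁(β+iω)| < α |β+iω|^σ`,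
`n² > (2α)^(1/γ)/cos δ`, `ω ≥ n² cos δ` and `Re ζ(β+iω) ≥ −|ζ(β+iω)| cos δ`,
then `|n² + ζ(β+iω)|² ≥ ((1/(2α)) ω^(1+γ) − n² cos δ)² + n⁴ sin²δ`. -/
theorem key_lower_bound (α γ σ β δ : ℝ) (N₁ : ℂ → ℂ)
    (hα : 0 < α) (hγ : γ ∈ Set.Ioo (0 : ℝ) 1) (hσ : 0 < σ) (hβ : 0 < β)
    (hδ : δ ∈ Set.Ioo 0 (Real.pi / 2))
    (hN₁ : ∀ ω : ℝ, Norm.norm (N₁ ((β : ℂ) + ω * Complex.I))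
      < α * Norm.norm ((β : ℂ) + ω * Complex.I) ^ σ)
    (n : ℕ) (hn1 : 0 < n) (hn : (2 * α) ^ (1 / γ) / Real.cos δ < (n : ℝ) ^ 2)
    (ω : ℝ) (hω : (n : ℝ) ^ 2 * Real.cos δ ≤ ω)
    (hsec : -(Norm.norm (((β : ℂ) + ω * Complex.I) ^ ((1 : ℂ) + (γ : ℂ))
          / ((α : ℂ) + N₁ ((β : ℂ) + ω * Complex.I)
              * ((β : ℂ) + ω * Complex.I) ^ (-(σ : ℂ)))) * Real.cos δ)
        ≤ ((((β : ℂ) + ω * Complex.I) ^ ((1 : ℂ) + (γ : ℂ))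
          / ((α : ℂ) + N₁ ((β : ℂ) + ω * Complex.I)
              * ((β : ℂ) + ω * Complex.I) ^ (-(σ : ℂ)))).re)) :
    (1 / (2 * α) * ω ^ (1 + γ) - (n : ℝ) ^ 2 * Real.cos δ) ^ 2
        + (n : ℝ) ^ 4 * Real.sin δ ^ 2
      ≤ Norm.norm (((n : ℝ) ^ 2 : ℂ)
          + ((β : ℂ) + ω * Complex.I) ^ ((1 : ℂ) + (γ : ℂ))
            / ((α : ℂ) + N₁ ((β : ℂ) + ω * Complex.I)
                * ((β : ℂ) + ω * Complex.I) ^ (-(σ : ℂ)))) ^ 2 := by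
  have hcos : 0 < Real.cos δ :=
    Real.cos_pos_of_mem_Ioo ⟨by linarith [hδ.1, Real.pi_pos], hδ.2⟩
  set z : ℂ := (β : ℂ) + ω * Complex.I with hz_def
  set ζ : ℂ := z ^ ((1 : ℂ) + (γ : ℂ)) / ((α : ℂ) + N₁ z * z ^ (-(σ : ℂ))) with hζ_def
  have hzre : z.re = β := by simp [hz_def]
  have hzim : z.im = ω := by simp [hz_def]
  have hz0 : z ≠ 0 := by
    intro h
    rw [h] at hzre
    simp at hzre
    exact hβ.ne hzre
  have haz : 0 < Norm.norm z := norm_pos_iff.mpr hz0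
  have hn2 : (0:ℝ) < (n : ℝ) ^ 2 := by positivity
  have hωpos : 0 < ω := lt_of_lt_of_le (mul_pos hn2 hcos) hω
  have hazω : ω ≤ Norm.norm z := by
    calc ω ≤ |z.im| := by rw [hzim]; exact le_abs_self ω
    _ ≤ Norm.norm z := Complex.abs_im_le_norm z
  -- abs of powers
  have habs1 : Norm.norm (z ^ ((1 : ℂ) + (γ : ℂ))) = Norm.norm z ^ (1 + γ) := by
    rw [Complex.norm_cpow_of_ne_zero hz0]
    simp
  have habsσ : Norm.norm (z ^ (-(σ : ℂ))) = Norm.norm z ^ (-σ) := by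
    rw [Complex.norm_cpow_of_ne_zero hz0]
    simp
  have hNb : Norm.norm (N₁ z) < α * Norm.norm z ^ σ := hN₁ ω
  have hcancel : Norm.norm z ^ σ * Norm.norm z ^ (-σ) = 1 := by
    rw [← Real.rpow_add haz]
    simp
  have hσneg : (0:ℝ) < Norm.norm z ^ (-σ) := Real.rpow_pos_of_pos haz _
  have hNσ : Norm.norm (N₁ z) * Norm.norm z ^ (-σ) < α := by
    have := mul_lt_mul_of_pos_right hNb hσneg
    rwa [mul_assoc, hcancel, mul_one] at this
  set D : ℂ := (α : ℂ) + N₁ z * z ^ (-(σ : ℂ)) with hD_def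
  have habsD : Norm.norm (N₁ z * z ^ (-(σ : ℂ)))
      = Norm.norm (N₁ z) * Norm.norm z ^ (-σ) := by
    rw [norm_mul, habsσ]
  have hDub : Norm.norm D < 2 * α := by
    calc Norm.norm D ≤ Norm.norm ((α : ℂ)) + Norm.norm (N₁ z * z ^ (-(σ : ℂ))) :=
          norm_add_le _ _
    _ = α + Norm.norm (N₁ z) * Norm.norm z ^ (-σ) := by
          rw [habsD, Complex.norm_real, Real.norm_eq_abs, abs_of_pos hα]
    _ < α + α := by linarith
    _ = 2 * α := by ring
  have hDlb : 0 < Norm.norm D := by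
    have h1 : Norm.norm ((α : ℂ)) ≤ Norm.norm D + Norm.norm (N₁ z * z ^ (-(σ : ℂ))) := by
      calc Norm.norm ((α : ℂ)) = Norm.norm (D + -(N₁ z * z ^ (-(σ : ℂ)))) := by
            rw [hD_def]; ring_nf
      _ ≤ Norm.norm D + Norm.norm (-(N₁ z * z ^ (-(σ : ℂ)))) := norm_add_le _ _
      _ = Norm.norm D + Norm.norm (N₁ z * z ^ (-(σ : ℂ))) := by
            rw [norm_neg]
    rw [Complex.norm_real, Real.norm_eq_abs, abs_of_pos hα, habsD] at h1
    linarith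
  set r : ℝ := Norm.norm ζ with hr_def
  have hr : r = Norm.norm z ^ (1 + γ) / Norm.norm D := by
    rw [hr_def, hζ_def, norm_div, habs1]
  set R : ℝ := 1 / (2 * α) * ω ^ (1 + γ) with hR_def
  have hRr : R ≤ r := by
    rw [hr, hR_def]
    rw [one_div_mul_eq_div]
    apply div_le_div₀ (Real.rpow_nonneg haz.le _)
      (Real.rpow_le_rpow hωpos.le hazω (by linarith [hγ.1])) hDlb hDub.le
  -- R > n² cos δ
  set c : ℝ := (n : ℝ) ^ 2 * Real.cos δ with hc_def
  have hcpos : 0 < c := mul_pos hn2 hcos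
  have hcγ : 2 * α < c ^ γ := by
    have h2 : (2 * α) ^ (1 / γ) < c := by
      rw [div_lt_iff₀ hcos] at hn
      rw [hc_def]; linarith
    have h3 : ((2 * α) ^ (1 / γ)) ^ γ < c ^ γ :=
      Real.rpow_lt_rpow (Real.rpow_nonneg (by linarith) _) h2 hγ.1
    rwa [← Real.rpow_mul (by linarith : (0:ℝ) ≤ 2 * α),
      one_div_mul_cancel hγ.1.ne', Real.rpow_one] at h3
  have hcR : c < R := by
    have hc1γ : c * c ^ γ ≤ ω ^ (1 + γ) := by
      calc c * c ^ γ = c ^ (1 + γ) := by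
            rw [Real.rpow_add hcpos, Real.rpow_one]
      _ ≤ ω ^ (1 + γ) := Real.rpow_le_rpow hcpos.le hω (by linarith [hγ.1])
    rw [hR_def]
    rw [one_div_mul_eq_div, lt_div_iff₀ (by linarith)]
    calc c * (2 * α) < c * c ^ γ := by
          exact mul_lt_mul_of_pos_left hcγ hcpos
    _ ≤ ω ^ (1 + γ) := hc1γ
  -- expand the modulus squared
  have hexp : Norm.norm (((n : ℝ) ^ 2 : ℂ) + ζ) ^ 2
      = ((n : ℝ) ^ 2 + ζ.re) ^ 2 + ζ.im ^ 2 := by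
    rw [Complex.sq_norm, Complex.normSq_apply, Complex.add_re, Complex.add_im]
    simp only [← Complex.ofReal_pow, Complex.ofReal_re, Complex.ofReal_im]
    ring
  have hr2 : ζ.re ^ 2 + ζ.im ^ 2 = r ^ 2 := by
    rw [hr_def, Complex.sq_norm, Complex.normSq_apply]; ring
  have hsec' : -(r * Real.cos δ) ≤ ζ.re := hsec
  have pyth : Real.sin δ ^ 2 + Real.cos δ ^ 2 = 1 := Real.sin_sq_add_cos_sq δ
  rw [hexp]
  have h4 : (n : ℝ) ^ 4 = ((n : ℝ) ^ 2) ^ 2 := by ring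
  rw [h4]
  exact key_aux ((n : ℝ) ^ 2) ζ.re ζ.im r R c (Real.cos δ) (Real.sin δ)
    hr2 pyth hc_def hsec' hRr hcR hn2.le
end

section
/- Let α > 0, γ ∈ (0,1), δ ∈ (0, π/2), and let n be a positive integer with n² > (2α)^(1+γ)/cos δ. Then ∫_{n² cos δ}^{∞} dω / ( ((1/(2α))·ω^(1+γ) − n² cos δ)² + n⁴ sin²δ ) ≤ π·(2α)^(1/(1+γ)) / ((1+γ)·n²·sin δ). -/
open MeasureTheory Set
open Real Filter

lemma auxQ {c w s : ℝ} (hc : c < 1) (hw : 0 < w) (hs : -1 < s) (hs1 : s < 1) :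
    IntegrableOn (fun t : ℝ => t ^ s / ((t - c) ^ 2 + w ^ 2)) (Ioi (0:ℝ)) := by
  have hmeas : Measurable fun t : ℝ => t ^ s / ((t - c) ^ 2 + w ^ 2) := by fun_prop
  rw [← Ioc_union_Ioi_eq_Ioi (zero_le_one (α := ℝ))]
  apply IntegrableOn.union
  · have h1 : IntegrableOn (fun t : ℝ => t ^ s * (w ^ 2)⁻¹) (Ioc (0:ℝ) 1) := by
      exact ((intervalIntegrable_iff_integrableOn_Ioc_of_le zero_le_one).mp
        (intervalIntegral.intervalIntegrable_rpow' hs)).mul_const _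
    apply Integrable.mono' h1 hmeas.aestronglyMeasurable
    rw [ae_restrict_iff' measurableSet_Ioc]
    refine ae_of_all _ (fun t ht => ?_)
    have ht0 : 0 < t := ht.1
    have h2 : (0:ℝ) < (t - c) ^ 2 + w ^ 2 := by positivity
    rw [Real.norm_eq_abs, abs_of_nonneg (by positivity)]
    rw [← div_eq_mul_inv]
    gcongr
    nlinarith [sq_nonneg (t - c)]
  · set m := 1 - max c 0 with hm_def
    have hm : 0 < m := by
      have : max c 0 < 1 := max_lt hc zero_lt_one
      simp only [hm_def]; linarith
    have h1 : IntegrableOn (fun t : ℝ => (m ^ 2)⁻¹ * t ^ (s - 2)) (Ioi (1:ℝ)) :=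
      (integrableOn_Ioi_rpow_of_lt (by linarith) zero_lt_one).const_mul _
    apply Integrable.mono' h1 hmeas.aestronglyMeasurable
    rw [ae_restrict_iff' measurableSet_Ioi]
    refine ae_of_all _ (fun t ht => ?_)
    have ht1 : 1 < t := ht
    have ht0 : 0 < t := by linarith
    have hmt : m * t ≤ t - c := by
      rcases le_total c 0 with h | h
      · have : max c 0 = 0 := max_eq_right h
        rw [hm_def, this]; nlinarith
      · have : max c 0 = c := max_eq_left h
        rw [hm_def, this]; nlinarith
    have hmt0 : 0 < m * t := by positivity
    have h2 : (0:ℝ) < (t - c) ^ 2 + w ^ 2 := by positivity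
    rw [Real.norm_eq_abs, abs_of_nonneg (by positivity)]
    have key : t ^ s / ((t - c) ^ 2 + w ^ 2) ≤ t ^ s / ((m * t) ^ 2) := by
      gcongr
      nlinarith [sq_nonneg w]
    refine key.trans (le_of_eq ?_)
    have e1 : t ^ (s - 2) = t ^ s * (t ^ 2)⁻¹ := by
      rw [← Real.rpow_natCast t 2, ← Real.rpow_neg ht0.le, ← Real.rpow_add ht0,
        ← sub_eq_add_neg]
      norm_num
    rw [e1, mul_pow]
    field_simp

lemma lorentz_int {A B : ℝ} (hA : 0 < A) (hA1 : A < 1) (hB : 0 < B) :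
    (∫ u in Ioi (0:ℝ), (1 / ((u - A) ^ 2 + B ^ 2) + 1 / ((u + A) ^ 2 + B ^ 2)))
      = Real.pi / B := by
  have i1 : IntegrableOn (fun u : ℝ => 1 / ((u - A) ^ 2 + B ^ 2)) (Ioi (0:ℝ)) := by
    have := auxQ (c := A) (w := B) hA1 hB (s := 0) (by norm_num) (by norm_num)
    simpa using this
  have i2 : IntegrableOn (fun u : ℝ => 1 / ((u + A) ^ 2 + B ^ 2)) (Ioi (0:ℝ)) := by
    have := auxQ (c := -A) (w := B) (by linarith) hB (s := 0) (by norm_num) (by norm_num)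
    simpa [sub_neg_eq_add] using this
  have hderiv : ∀ x ∈ Ici (0:ℝ),
      HasDerivAt (fun u => B⁻¹ * (Real.arctan ((u - A) / B) + Real.arctan ((u + A) / B)))
        (1 / ((x - A) ^ 2 + B ^ 2) + 1 / ((x + A) ^ 2 + B ^ 2)) x := by
    intro x _
    have d1 : HasDerivAt (fun u : ℝ => (u - A) / B) (1 / B) x := by
      simpa using ((hasDerivAt_id x).sub_const A).div_const B
    have d2 : HasDerivAt (fun u : ℝ => (u + A) / B) (1 / B) x := by
      simpa using ((hasDerivAt_id x).add_const A).div_const B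
    have h1 : HasDerivAt (fun u : ℝ => Real.arctan ((u - A) / B))
        ((1 / (1 + ((x - A) / B) ^ 2)) * (1 / B)) x :=
      (Real.hasDerivAt_arctan _).comp x d1
    have h2 : HasDerivAt (fun u : ℝ => Real.arctan ((u + A) / B))
        ((1 / (1 + ((x + A) / B) ^ 2)) * (1 / B)) x :=
      (Real.hasDerivAt_arctan _).comp x d2
    have h3 : HasDerivAt (fun u => B⁻¹ * (Real.arctan ((u - A) / B) + Real.arctan ((u + A) / B))) _ x :=
      (h1.add h2).const_mul B⁻¹
    convert h3 using 1
    have e1 : (0:ℝ) < 1 + ((x - A) / B) ^ 2 := by positivity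
    have e2 : (0:ℝ) < 1 + ((x + A) / B) ^ 2 := by positivity
    field_simp
    ring
  have htend : Tendsto (fun u : ℝ => B⁻¹ * (Real.arctan ((u - A) / B) + Real.arctan ((u + A) / B)))
      atTop (nhds (Real.pi / B)) := by
    have l1 : Tendsto (fun u : ℝ => (u - A) / B) atTop atTop := by
      apply Tendsto.atTop_div_const hB
      simpa [sub_eq_add_neg] using tendsto_atTop_add_const_right atTop (-A) tendsto_id
    have l2 : Tendsto (fun u : ℝ => (u + A) / B) atTop atTop := by
      apply Tendsto.atTop_div_const hB
      exact tendsto_atTop_add_const_right atTop A tendsto_id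
    have t1 := (Real.tendsto_arctan_atTop.mono_right nhdsWithin_le_nhds).comp l1
    have t2 := (Real.tendsto_arctan_atTop.mono_right nhdsWithin_le_nhds).comp l2
    have : Tendsto (fun u : ℝ => B⁻¹ * (Real.arctan ((u - A) / B) + Real.arctan ((u + A) / B)))
        atTop (nhds (B⁻¹ * (Real.pi / 2 + Real.pi / 2))) := ((t1.add t2).const_mul B⁻¹)
    convert this using 2
    ring
  have hz : Real.arctan ((0 - A) / B) + Real.arctan ((0 + A) / B) = 0 := by
    rw [zero_sub, zero_add, neg_div, Real.arctan_neg]; ring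
  rw [integral_Ioi_of_hasDerivAt_of_tendsto' hderiv (i1.add i2) htend, hz]
  ring

lemma pow_pair_le {q : ℝ} (hq : 1/2 ≤ q) (hq1 : q ≤ 1) {t : ℝ} (ht : 0 < t) :
    t ^ (q - 1) + t ^ (1 - q) ≤ t ^ (-(1/2) : ℝ) + t ^ ((1/2) : ℝ) := by
  have hpos : (0:ℝ) < t ^ (-(1/2) : ℝ) := Real.rpow_pos_of_pos ht _
  have e1 : t ^ (q - 1) = t ^ (q - 1/2) * t ^ (-(1/2) : ℝ) := by
    rw [← Real.rpow_add ht]; ring_nf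
  have e2 : t ^ (1 - q) = t ^ (3/2 - q) * t ^ (-(1/2) : ℝ) := by
    rw [← Real.rpow_add ht]; ring_nf
  have e3 : t ^ ((1/2) : ℝ) = t * t ^ (-(1/2) : ℝ) := by
    nth_rewrite 2 [← Real.rpow_one t]
    rw [← Real.rpow_add ht]; norm_num
  have hxy : t ^ (q - 1/2) * t ^ (3/2 - q) = t := by
    rw [← Real.rpow_add ht]; norm_num
  have key : t ^ (q - 1/2) + t ^ (3/2 - q) ≤ 1 + t := by
    rcases le_total t 1 with h | h
    · have hx := Real.rpow_le_one ht.le h (by linarith : (0:ℝ) ≤ q - 1/2)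
      have hy := Real.rpow_le_one ht.le h (by linarith : (0:ℝ) ≤ 3/2 - q)
      nlinarith [hxy]
    · have hx := Real.one_le_rpow h (by linarith : (0:ℝ) ≤ q - 1/2)
      have hy := Real.one_le_rpow h (by linarith : (0:ℝ) ≤ 3/2 - q)
      nlinarith [hxy]
  calc t ^ (q - 1) + t ^ (1 - q) = (t ^ (q - 1/2) + t ^ (3/2 - q)) * t ^ (-(1/2) : ℝ) := by
        rw [e1, e2]; ring
    _ ≤ (1 + t) * t ^ (-(1/2) : ℝ) := by gcongr
    _ = t ^ (-(1/2) : ℝ) + t ^ ((1/2) : ℝ) := by rw [e3]; ring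

set_option maxHeartbeats 1600000 in
/-- Estimate for the tail integral: if `n² > (2α)^(1+γ)/cos δ` then
`∫_{n² cos δ}^∞ dω/(((1/(2α)) ω^(1+γ) − n² cos δ)² + n⁴ sin²δ)
  ≤ π (2α)^(1/(1+γ))/((1+γ) n² sin δ)`. -/
theorem tail_integral_estimate (α γ δ : ℝ) (hα : 0 < α)
    (hγ : γ ∈ Set.Ioo (0 : ℝ) 1) (hδ : δ ∈ Set.Ioo 0 (Real.pi / 2))
    (n : ℕ) (hn1 : 0 < n)
    (hn : (2 * α) ^ (1 + γ) / Real.cos δ < (n : ℝ) ^ 2) :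
    (∫ ω in Ioi ((n : ℝ) ^ 2 * Real.cos δ),
        1 / ((1 / (2 * α) * ω ^ (1 + γ) - (n : ℝ) ^ 2 * Real.cos δ) ^ 2
              + (n : ℝ) ^ 4 * Real.sin δ ^ 2))
      ≤ Real.pi * (2 * α) ^ (1 / (1 + γ)) / ((1 + γ) * (n : ℝ) ^ 2 * Real.sin δ) := by
  obtain ⟨hγ0, hγ1⟩ := hγ
  obtain ⟨hδ0, hδ2⟩ := hδ
  have hπ := Real.pi_pos
  have hα' : α ≠ 0 := ne_of_gt hα
  -- auxiliary double-angle facts, before generalizing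
  obtain ⟨A, hA_def⟩ : ∃ x, Real.cos (δ/2) = x := ⟨_, rfl⟩
  obtain ⟨B, hB_def⟩ : ∃ x, Real.sin (δ/2) = x := ⟨_, rfl⟩
  have hB0 : 0 < B := by
    rw [← hB_def]; exact Real.sin_pos_of_pos_of_lt_pi (by linarith) (by linarith)
  have hA0 : 0 < A := by
    rw [← hA_def]; exact Real.cos_pos_of_mem_Ioo ⟨by linarith, by linarith⟩
  have hAle : A ≤ 1 := by rw [← hA_def]; exact Real.cos_le_one _
  have hAB : A ^ 2 + B ^ 2 = 1 := by
    rw [← hA_def, ← hB_def]; have := Real.sin_sq_add_cos_sq (δ/2); linarith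
  have hA1 : A < 1 :=
    lt_of_pow_lt_pow_left₀ 2 zero_le_one (by rw [one_pow]; linarith [pow_pos hB0 2])
  have hcA' : Real.cos δ = A ^ 2 - B ^ 2 := by
    rw [show δ = 2 * (δ/2) by ring, Real.cos_two_mul, hA_def]; linarith [hAB]
  have hwAB' : Real.sin δ = 2 * A * B := by
    rw [show δ = 2 * (δ/2) by ring, Real.sin_two_mul, hA_def, hB_def]; ring
  obtain ⟨c, hc_def⟩ : ∃ x, Real.cos δ = x := ⟨_, rfl⟩
  obtain ⟨w, hw_def⟩ : ∃ x, Real.sin δ = x := ⟨_, rfl⟩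
  obtain ⟨p, hp_def⟩ : ∃ x, 1 + γ = x := ⟨_, rfl⟩
  obtain ⟨q, hq_def⟩ : ∃ x, 1 / p = x := ⟨_, rfl⟩
  obtain ⟨N, hN_def⟩ : ∃ x, ((n:ℝ)) ^ 2 = x := ⟨_, rfl⟩
  have hcA : c = A ^ 2 - B ^ 2 := by rw [← hc_def]; exact hcA'
  have hwAB : w = 2 * A * B := by rw [← hw_def]; exact hwAB'
  have hp1 : 1 < p := by rw [← hp_def]; linarith
  have hp0 : 0 < p := by linarith
  have hp2 : p < 2 := by rw [← hp_def]; linarith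
  have h2a : (0:ℝ) < 2 * α := by linarith
  have hq0 : 0 < q := by rw [← hq_def]; exact one_div_pos.mpr hp0
  have hq1 : q < 1 := by rw [← hq_def, div_lt_one hp0]; linarith
  have hqh : 1/2 < q := by rw [← hq_def, div_lt_div_iff₀ (by norm_num) hp0]; linarith
  have hqp : q * p = 1 := by rw [← hq_def]; exact one_div_mul_cancel hp0.ne'
  have hc0 : 0 < c := by
    rw [← hc_def]; exact Real.cos_pos_of_mem_Ioo ⟨by linarith, hδ2⟩
  have hw0 : 0 < w := by
    rw [← hw_def]; exact Real.sin_pos_of_pos_of_lt_pi hδ0 (by linarith)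
  have hcw : c ^ 2 + w ^ 2 = 1 := by
    rw [← hc_def, ← hw_def]; have := Real.sin_sq_add_cos_sq δ; linarith
  have hc1 : c < 1 :=
    lt_of_pow_lt_pow_left₀ 2 zero_le_one (by rw [one_pow]; linarith [pow_pos hw0 2])
  have hNn : (1:ℝ) ≤ (n:ℝ) := by exact_mod_cast hn1
  have hN1 : 1 ≤ N := by
    rw [← hN_def]
    have := pow_le_pow_left₀ zero_le_one hNn 2
    simpa using this
  have hN0 : 0 < N := by linarith
  have hNc0 : (0:ℝ) ≤ N * c := (mul_pos hN0 hc0).le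
  have h2aN : (0:ℝ) < 2 * α * N := mul_pos h2a hN0
  have hn4 : ((n:ℝ)) ^ 4 = N ^ 2 := by rw [← hN_def]; ring
  have hNw2 : (0:ℝ) < N ^ 2 * w ^ 2 := mul_pos (pow_pos hN0 2) (pow_pos hw0 2)
  have hden : ∀ x : ℝ, (0:ℝ) < x ^ 2 + N ^ 2 * w ^ 2 := fun x =>
    add_pos_of_nonneg_of_pos (sq_nonneg x) hNw2
  have hQpos : ∀ x : ℝ, (0:ℝ) < (x - c) ^ 2 + w ^ 2 := fun x =>
    add_pos_of_nonneg_of_pos (sq_nonneg _) (pow_pos hw0 2)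
  simp only [hc_def, hw_def, hp_def, hq_def, hN_def, hn4]
  have hfm : Measurable (fun ω : ℝ => 1 / ((1/(2*α) * ω ^ p - N*c) ^ 2 + N^2 * w^2)) := by
    fun_prop
  -- Integrability of the main integrand on Ioi 0
  have hfint : IntegrableOn (fun ω : ℝ => 1 / ((1/(2*α) * ω ^ p - N*c) ^ 2 + N^2 * w^2))
      (Ioi (0:ℝ)) := by
    obtain ⟨R, hR_def⟩ : ∃ x, max 1 ((4*α*(N*c)) ^ (1/p)) = x := ⟨_, rfl⟩
    have hR1 : (1:ℝ) ≤ R := by rw [← hR_def]; exact le_max_left _ _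
    have hR0 : (0:ℝ) < R := by linarith
    rw [← Ioc_union_Ioi_eq_Ioi hR0.le]
    apply IntegrableOn.union
    · apply Integrable.mono' (g := fun _ : ℝ => (N^2 * w^2)⁻¹)
        (integrableOn_const measure_Ioc_lt_top.ne) hfm.aestronglyMeasurable
      rw [ae_restrict_iff' measurableSet_Ioc]
      refine ae_of_all _ (fun t _ => ?_)
      have h2 := hden (1/(2*α) * t ^ p - N*c)
      rw [Real.norm_eq_abs, abs_of_nonneg (one_div_nonneg.mpr h2.le), ← one_div]
      gcongr
      linarith [sq_nonneg (1/(2*α) * t ^ p - N*c)]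
    · apply Integrable.mono' (g := fun t : ℝ => 16*α^2 * t ^ (-2:ℝ))
        ((integrableOn_Ioi_rpow_of_lt (show (-2:ℝ) < -1 by norm_num) hR0).const_mul (16*α^2))
        hfm.aestronglyMeasurable
      rw [ae_restrict_iff' measurableSet_Ioi]
      refine ae_of_all _ (fun t ht => ?_)
      have htR : R < t := ht
      have ht1 : (1:ℝ) ≤ t := by linarith
      have ht0 : (0:ℝ) < t := by linarith
      have hD0 : (0:ℝ) ≤ 4*α*(N*c) := mul_nonneg (by linarith) hNc0
      have hDp : ((4*α*(N*c)) ^ (1/p)) ^ p = 4*α*(N*c) := by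
        rw [← Real.rpow_mul hD0, one_div_mul_cancel hp0.ne', Real.rpow_one]
      have hD : 4*α*(N*c) ≤ t ^ p := by
        rw [← hDp]
        refine Real.rpow_le_rpow (Real.rpow_nonneg hD0 _) ?_ hp0.le
        calc (4*α*(N*c)) ^ (1/p) ≤ R := by rw [← hR_def]; exact le_max_right _ _
          _ ≤ t := htR.le
      have hpt : t ≤ t ^ p := by
        calc t = t ^ (1:ℝ) := (Real.rpow_one t).symm
          _ ≤ t ^ p := Real.rpow_le_rpow_of_exponent_le ht1 hp1.le
      have h5 : t/(4*α) ≤ 1/(2*α) * t ^ p - N*c := by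
        have hNc : N*c ≤ t ^ p / (4*α) := by
          rw [le_div_iff₀ (by linarith : (0:ℝ) < 4*α)]; linarith
        have he : 1/(2*α) * t ^ p - t ^ p/(4*α) = t ^ p/(4*α) := by
          field_simp
          ring
        have h' : t/(4*α) ≤ t ^ p/(4*α) := by gcongr
        linarith
      have hkey : t^2/(16*α^2) ≤ (1/(2*α) * t ^ p - N*c) ^ 2 + N^2 * w^2 := by
        have h6 : (t/(4*α))^2 ≤ (1/(2*α) * t ^ p - N*c) ^ 2 :=
          pow_le_pow_left₀ (div_pos ht0 (by linarith)).le h5 2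
        have h7 : (t/(4*α))^2 = t^2/(16*α^2) := by
          rw [div_pow]
          ring
        linarith [hNw2.le]
      rw [Real.norm_eq_abs, abs_of_nonneg (one_div_nonneg.mpr (hden _).le)]
      have ha16 : (0:ℝ) < 16*α^2 := by positivity
      have e : t ^ (-2:ℝ) = (t^2)⁻¹ := by
        rw [show (-2:ℝ) = -((2:ℕ):ℝ) by norm_num, Real.rpow_neg ht0.le, Real.rpow_natCast]
      rw [e, show 16*α^2*(t^2)⁻¹ = 1/(t^2/(16*α^2)) by field_simp]
      gcongr
  -- the J-integral facts
  have int1 : IntegrableOn (fun t : ℝ => t ^ (q-1) / ((t-c)^2 + w^2)) (Ioi (0:ℝ)) :=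
    auxQ hc1 hw0 (by linarith) (by linarith)
  have int2 : IntegrableOn (fun t : ℝ => t ^ (1-q) / ((t-c)^2 + w^2)) (Ioi (0:ℝ)) :=
    auxQ hc1 hw0 (by linarith) (by linarith)
  have int3 : IntegrableOn (fun t : ℝ => t ^ ((1/2):ℝ) / ((t-c)^2 + w^2)) (Ioi (0:ℝ)) :=
    auxQ hc1 hw0 (by norm_num) (by norm_num)
  have int4 : IntegrableOn (fun t : ℝ => t ^ (-(1/2):ℝ) / ((t-c)^2 + w^2)) (Ioi (0:ℝ)) :=
    auxQ hc1 hw0 (by norm_num) (by norm_num)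
  obtain ⟨J, hJ_def⟩ : ∃ x, (∫ t in Ioi (0:ℝ), t ^ (q-1) / ((t-c)^2 + w^2)) = x := ⟨_, rfl⟩
  have hJ0 : 0 ≤ J := by
    rw [← hJ_def]
    exact setIntegral_nonneg measurableSet_Ioi
      (fun t ht => div_nonneg (Real.rpow_nonneg (le_of_lt ht) _) (hQpos t).le)
  -- inversion symmetry : ∫ t^(1-q)/Q = J
  have hJJ : (∫ t in Ioi (0:ℝ), t ^ (1-q) / ((t-c)^2 + w^2)) = J := by
    have sub3 := integral_comp_rpow_Ioi (fun t : ℝ => t ^ (q-1) / ((t-c)^2 + w^2))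
      (p := (-1:ℝ)) (by norm_num)
    rw [← hJ_def, ← sub3]
    apply setIntegral_congr_fun measurableSet_Ioi
    intro x hx
    have hx0 : (0:ℝ) < x := hx
    have hQx := hQpos x
    have hxq : (x ^ (-1:ℝ)) ^ (q-1) = x ^ (1-q) := by
      rw [← Real.rpow_mul hx0.le, show (-1:ℝ) * (q-1) = 1-q by ring]
    have hx' : x⁻¹ * x = 1 := inv_mul_cancel₀ hx0.ne'
    have hQinv : (x ^ (-1:ℝ) - c)^2 + w^2 = ((x-c)^2 + w^2)/x^2 := by
      rw [Real.rpow_neg_one, eq_div_iff (pow_pos hx0 2).ne']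
      linear_combination (x⁻¹*x + 1 - 2*c*x) * hx' + (x^2 - 1) * hcw
    have hxm2 : x ^ ((-1:ℝ) - 1) = (x^2)⁻¹ := by
      rw [show ((-1:ℝ) - 1) = -((2:ℕ):ℝ) by norm_num, Real.rpow_neg hx0.le, Real.rpow_natCast]
    show x ^ (1-q) / ((x-c)^2 + w^2)
        = (|(-1:ℝ)| * x ^ ((-1:ℝ) - 1)) • ((x ^ (-1:ℝ)) ^ (q-1) / ((x ^ (-1:ℝ) - c)^2 + w^2))
    rw [hxq, hQinv, hxm2, smul_eq_mul, abs_of_nonpos (by norm_num : (-1:ℝ) ≤ 0)]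
    field_simp
  -- the square substitution and exact Lorentzian evaluation
  have hS : (∫ t in Ioi (0:ℝ), (t ^ ((1/2):ℝ) / ((t-c)^2 + w^2)
      + t ^ (-(1/2):ℝ) / ((t-c)^2 + w^2))) = Real.pi / B := by
    have sub4 := integral_comp_rpow_Ioi (fun t : ℝ => t ^ ((1/2):ℝ) / ((t-c)^2 + w^2)
      + t ^ (-(1/2):ℝ) / ((t-c)^2 + w^2)) (p := (2:ℝ)) two_ne_zero
    rw [← sub4, ← lorentz_int hA0 hA1 hB0]
    apply setIntegral_congr_fun measurableSet_Ioi
    intro x hx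
    have hx0 : (0:ℝ) < x := hx
    have hx2 : x ^ (2:ℝ) = x ^ 2 := by
      rw [show (2:ℝ) = ((2:ℕ):ℝ) by norm_num, Real.rpow_natCast]
    have hxh : (x ^ (2:ℝ)) ^ ((1/2):ℝ) = x := by
      rw [← Real.rpow_mul hx0.le, show (2:ℝ) * (1/2) = 1 by norm_num, Real.rpow_one]
    have hxm : (x ^ (2:ℝ)) ^ (-(1/2):ℝ) = x⁻¹ := by
      rw [← Real.rpow_mul hx0.le, show (2:ℝ) * (-(1/2)) = -1 by norm_num, Real.rpow_neg_one]
    have hx1 : x ^ ((2:ℝ) - 1) = x := by norm_num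
    have hD1 : (0:ℝ) < (x - A)^2 + B^2 :=
      add_pos_of_nonneg_of_pos (sq_nonneg _) (pow_pos hB0 2)
    have hD2 : (0:ℝ) < (x + A)^2 + B^2 :=
      add_pos_of_nonneg_of_pos (sq_nonneg _) (pow_pos hB0 2)
    have hfac : (x^2 - c)^2 + w^2 = ((x - A)^2 + B^2) * ((x + A)^2 + B^2) := by
      rw [hcA, hwAB]; ring
    have hB2 : B^2 = 1 - A^2 := by linarith [hAB]
    show (|(2:ℝ)| * x ^ ((2:ℝ)-1)) • ((x ^ (2:ℝ)) ^ ((1/2):ℝ) / ((x ^ (2:ℝ) - c)^2 + w^2)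
          + (x ^ (2:ℝ)) ^ (-(1/2):ℝ) / ((x ^ (2:ℝ) - c)^2 + w^2))
        = 1 / ((x - A)^2 + B^2) + 1 / ((x + A)^2 + B^2)
    rw [hxh, hxm, hx1, hx2, hfac, smul_eq_mul, show |(2:ℝ)| = 2 by norm_num, hB2]
    have hD1' : ((x - A)^2 + (1 - A^2)) ≠ 0 := by rw [← hB2]; exact hD1.ne'
    have hD2' : ((x + A)^2 + (1 - A^2)) ≠ 0 := by rw [← hB2]; exact hD2.ne'
    field_simp
    ring
  -- conclude J ≤ π/(2B)
  have hJle : J ≤ Real.pi / (2*B) := by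
    have e : 2 * J = ∫ t in Ioi (0:ℝ),
        (t ^ (q-1) / ((t-c)^2 + w^2) + t ^ (1-q) / ((t-c)^2 + w^2)) := by
      rw [integral_add int1 int2, hJJ, hJ_def]; ring
    have mono : (∫ t in Ioi (0:ℝ),
        (t ^ (q-1) / ((t-c)^2 + w^2) + t ^ (1-q) / ((t-c)^2 + w^2)))
        ≤ ∫ t in Ioi (0:ℝ), (t ^ ((1/2):ℝ) / ((t-c)^2 + w^2)
            + t ^ (-(1/2):ℝ) / ((t-c)^2 + w^2)) := by
      apply setIntegral_mono_on (int1.add int2) (int3.add int4) measurableSet_Ioi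
      intro t ht
      have ht0 : (0:ℝ) < t := ht
      have hQ := hQpos t
      have hkey := pow_pair_le hqh.le hq1.le ht0
      simp only [Pi.add_apply]
      rw [← add_div, ← add_div, div_le_div_iff_of_pos_right hQ]
      linarith
    have h2J : 2 * J ≤ Real.pi / B := by rw [e, ← hS]; exact mono
    rw [le_div_iff₀ hB0] at h2J
    rw [le_div_iff₀ (mul_pos two_pos hB0), show J * (2*B) = 2*J*B by ring]
    exact h2J
  -- first substitution : ω = x^q
  have sub1 := integral_comp_rpow_Ioi
    (fun ω : ℝ => 1 / ((1/(2*α) * ω ^ p - N*c) ^ 2 + N^2 * w^2)) (p := q) hq0.ne'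
  have e1 : EqOn
      (fun x : ℝ => (|q| * x ^ (q-1)) •
        (1 / ((1/(2*α) * (x ^ q) ^ p - N*c) ^ 2 + N^2 * w^2)))
      (fun x : ℝ => q * (x ^ (q-1) * (1 / ((1/(2*α) * x - N*c) ^ 2 + N^2 * w^2))))
      (Ioi (0:ℝ)) := by
    intro x hx
    have hx0 : (0:ℝ) < x := hx
    have hxqp : (x ^ q) ^ p = x := by
      rw [← Real.rpow_mul hx0.le, hqp, Real.rpow_one]
    simp only [smul_eq_mul, hxqp, abs_of_pos hq0]
    ring
  rw [setIntegral_congr_fun measurableSet_Ioi e1, integral_const_mul] at sub1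
  -- second substitution : scaling x = 2αN t
  have sub2 := integral_comp_mul_left_Ioi
    (fun x : ℝ => x ^ (q-1) * (1 / ((1/(2*α) * x - N*c) ^ 2 + N^2 * w^2))) 0 h2aN
  rw [mul_zero, smul_eq_mul] at sub2
  have e2 : EqOn
      (fun x : ℝ => (fun x : ℝ => x ^ (q-1) * (1 / ((1/(2*α) * x - N*c) ^ 2 + N^2 * w^2)))
        (2*α*N*x))
      (fun x : ℝ => ((2*α*N) ^ (q-1) * (1/N^2)) * (x ^ (q-1) / ((x-c)^2 + w^2)))
      (Ioi (0:ℝ)) := by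
    intro x hx
    have hx0 : (0:ℝ) < x := hx
    have hQ := hQpos x
    show (2*α*N*x) ^ (q-1) * (1 / ((1/(2*α) * (2*α*N*x) - N*c) ^ 2 + N^2 * w^2))
        = ((2*α*N) ^ (q-1) * (1/N^2)) * (x ^ (q-1) / ((x-c)^2 + w^2))
    rw [Real.mul_rpow h2aN.le hx0.le,
      show 1/(2*α) * (2*α*N*x) - N*c = N*(x - c) by field_simp,
      show (N*(x-c))^2 + N^2*w^2 = N^2*((x-c)^2 + w^2) by ring]
    rw [div_eq_mul_inv, mul_inv, ← Real.rpow_natCast N 2]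
    field_simp
  rw [setIntegral_congr_fun measurableSet_Ioi e2, integral_const_mul, hJ_def] at sub2
  have hG0 : (∫ x in Ioi (0:ℝ), x ^ (q-1) * (1 / ((1/(2*α) * x - N*c) ^ 2 + N^2 * w^2)))
      = (2*α*N) * ((2*α*N) ^ (q-1) * (1/N^2) * J) := by
    rw [sub2]
    rw [← mul_assoc, mul_inv_cancel₀ h2aN.ne', one_mul]
  have hpow : (2*α*N) * (2*α*N) ^ (q-1) = (2*α*N) ^ q := by
    nth_rewrite 1 [← Real.rpow_one (2*α*N)]
    rw [← Real.rpow_add h2aN]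
    norm_num
  have hmulr : (2*α*N) ^ q = (2*α) ^ q * N ^ q := Real.mul_rpow h2a.le hN0.le
  have hNq : N ^ q ≤ N := by
    calc N ^ q ≤ N ^ (1:ℝ) := Real.rpow_le_rpow_of_exponent_le hN1 hq1.le
      _ = N := Real.rpow_one N
  have hw2B : w ≤ 2*B := by
    rw [hwAB]
    have h : A*B ≤ B := by
      calc A*B ≤ 1*B := mul_le_mul_of_nonneg_right hAle hB0.le
        _ = B := one_mul B
    linarith
  calc (∫ ω in Ioi (N*c), 1 / ((1/(2*α) * ω ^ p - N*c) ^ 2 + N^2 * w^2))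
      ≤ ∫ ω in Ioi (0:ℝ), 1 / ((1/(2*α) * ω ^ p - N*c) ^ 2 + N^2 * w^2) := by
        apply setIntegral_mono_set hfint
        · exact ae_of_all _ (fun ω => one_div_nonneg.mpr (hden _).le)
        · exact HasSubset.Subset.eventuallyLE (Ioi_subset_Ioi hNc0)
    _ = q * ∫ x in Ioi (0:ℝ), x ^ (q-1) * (1 / ((1/(2*α) * x - N*c) ^ 2 + N^2 * w^2)) :=
        sub1.symm
    _ = q * ((2*α) ^ q * N ^ q * (1/N^2) * J) := by
        rw [hG0, ← hmulr, ← hpow]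
        ring
    _ ≤ q * ((2*α) ^ q * N * (1/N^2) * (Real.pi/(2*B))) := by
        have h2aq : (0:ℝ) ≤ (2*α) ^ q := (Real.rpow_pos_of_pos h2a q).le
        have hNq0 : (0:ℝ) ≤ N ^ q := (Real.rpow_pos_of_pos hN0 q).le
        have hN2i : (0:ℝ) ≤ 1/N^2 := by positivity
        gcongr
    _ ≤ Real.pi * (2*α) ^ q / (p * N * w) := by
        rw [show q * ((2*α) ^ q * N * (1/N^2) * (Real.pi/(2*B)))
            = Real.pi * (2*α) ^ q / (p * N * (2*B)) by
          rw [← hq_def]; field_simp]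
        gcongr Real.pi * (2*α) ^ q / ?_
        exact mul_le_mul_of_nonneg_left hw2B (mul_pos hp0 hN0).le
end

section
/- Let α > 0, γ ∈ (0,1), σ > 0, and let N₁ be holomorphic and bounded on the open right half-plane Π₀ = {λ ∈ ℂ : Re λ > 0}. Let δ ∈ (0, (1−γ)π/2). Then there exists β₀ > 0 such that for every β ≥ β₀ and every ω ∈ ℝ: (1) |N₁(β+iω)| < α·|β+iω|^σ, and (2) the complex number ζ(β+iω) = (β+iω)^(1+γ)/(α + N₁(β+iω)·(β+iω)^(−σ)) satisfies Re ζ(β+iω) ≥ −|ζ(β+iω)| cos δ (equivalently, |Arg ζ(β+iω)| ≤ π − δ). -/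
open Complex

set_option maxHeartbeats 1000000

private lemma aux_cs (φ u v : ℝ) :
    (Real.cos φ * u + Real.sin φ * v) ^ 2 ≤ u ^ 2 + v ^ 2 := by
  nlinarith [sq_nonneg (Real.cos φ * v - Real.sin φ * u), Real.sin_sq_add_cos_sq φ]

private lemma aux_neg_le (s a : ℝ) (h : s ^ 2 ≤ a ^ 2) (ha : 0 ≤ a) : -a ≤ s := by
  nlinarith [sq_nonneg (s + a)]

open Complex

/-- Choice of the abscissa `β`: if `N₁` is holomorphic and bounded on the open
right half-plane and `δ ∈ (0, (1−γ)π/2)`, then there is `β₀ > 0` such that for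
all `β ≥ β₀` and all `ω ∈ ℝ`: `|N₁(β+iω)| < α |β+iω|^σ`, and
`ζ(β+iω) = (β+iω)^(1+γ)/(α + N₁(β+iω)(β+iω)^(−σ))` satisfies
`Re ζ(β+iω) ≥ −|ζ(β+iω)| cos δ` (i.e. `|Arg ζ(β+iω)| ≤ π − δ`). -/
theorem choice_of_beta (α γ σ : ℝ) (hα : 0 < α) (hγ : γ ∈ Set.Ioo (0 : ℝ) 1)
    (hσ : 0 < σ) (N₁ : ℂ → ℂ)
    (hN₁hol : DifferentiableOn ℂ N₁ {l : ℂ | 0 < l.re})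
    (hN₁bdd : ∃ M : ℝ, ∀ l : ℂ, 0 < l.re → ‖(N₁ l)‖ ≤ M)
    (δ : ℝ) (hδ : δ ∈ Set.Ioo 0 ((1 - γ) * Real.pi / 2)) :
    ∃ β₀ : ℝ, 0 < β₀ ∧ ∀ β : ℝ, β₀ ≤ β → ∀ ω : ℝ,
      ‖(N₁ ((β : ℂ) + ω * Complex.I))‖
          < α * ‖((β : ℂ) + ω * Complex.I)‖ ^ σ ∧
      -(‖(((β : ℂ) + ω * Complex.I) ^ ((1 : ℂ) + (γ : ℂ))
            / ((α : ℂ) + N₁ ((β : ℂ) + ω * Complex.I)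
                * ((β : ℂ) + ω * Complex.I) ^ (-(σ : ℂ))))‖ * Real.cos δ)
        ≤ ((((β : ℂ) + ω * Complex.I) ^ ((1 : ℂ) + (γ : ℂ))
            / ((α : ℂ) + N₁ ((β : ℂ) + ω * Complex.I)
                * ((β : ℂ) + ω * Complex.I) ^ (-(σ : ℂ)))).re) := by
  obtain ⟨M₀, hM₀⟩ := hN₁bdd
  obtain ⟨M, hM, hMnn⟩ : ∃ M : ℝ, (∀ l : ℂ, 0 < l.re → ‖N₁ l‖ ≤ M) ∧ 0 ≤ M :=
    ⟨max M₀ 0, fun l hl => (hM₀ l hl).trans (le_max_left _ _), le_max_right _ _⟩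
  obtain ⟨hγ0, hγ1⟩ := hγ
  obtain ⟨hδ0, hδlt⟩ := hδ
  have hπ := Real.pi_pos
  have hδpi2 : δ < Real.pi / 2 := by nlinarith
  have hcosδ : 0 < Real.cos δ := Real.cos_pos_of_mem_Ioo ⟨by linarith, hδpi2⟩
  have hcosδ1 : Real.cos δ ≤ 1 := Real.cos_le_one δ
  have hsin0 : 0 ≤ Real.sin (γ * Real.pi / 2) :=
    Real.sin_nonneg_of_nonneg_of_le_pi (by positivity) (by nlinarith)
  have hsinlt : Real.sin (γ * Real.pi / 2) < Real.cos δ := by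
    have h1 : Real.sin (γ * Real.pi / 2) = Real.cos ((1 - γ) * Real.pi / 2) := by
      rw [← Real.cos_pi_div_two_sub]; ring_nf
    rw [h1]
    exact Real.cos_lt_cos_of_nonneg_of_le_pi (le_of_lt hδ0) (by nlinarith) hδlt
  obtain ⟨c, hcdef, hc, hc1⟩ : ∃ c : ℝ, c = Real.cos δ - Real.sin (γ * Real.pi / 2)
      ∧ 0 < c ∧ c ≤ 1 := ⟨_, rfl, by linarith, by linarith⟩
  obtain ⟨K, hK1, hKa, hKb⟩ : ∃ K : ℝ, 1 ≤ K ∧ M / α < K ∧ 2 * M / (α * c) ≤ K := by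
    refine ⟨max (M / α) (2 * M / (α * c)) + 1, ?_, ?_, ?_⟩
    · have : (0:ℝ) ≤ max (M / α) (2 * M / (α * c)) := le_max_of_le_left (by positivity)
      linarith
    · linarith [le_max_left (M / α) (2 * M / (α * c))]
    · linarith [le_max_right (M / α) (2 * M / (α * c))]
  have hK : 0 < K := by linarith
  refine ⟨max 1 (K ^ (1/σ)), lt_of_lt_of_le one_pos (le_max_left _ _), ?_⟩
  intro β hβ ω
  have hβ1 : (1:ℝ) ≤ β := le_trans (le_max_left _ _) hβ
  have hβK : K ^ (1/σ) ≤ β := le_trans (le_max_right _ _) hβ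
  have hβpos : 0 < β := by linarith
  set l : ℂ := (β:ℂ) + ω * Complex.I with hldef
  have hre : l.re = β := by simp [hldef]
  have hrepos : 0 < l.re := by rw [hre]; exact hβpos
  have hlne : l ≠ 0 := fun h => by simp [h] at hrepos
  have habsl : β ≤ ‖l‖ := by
    have := Complex.re_le_norm l; rwa [hre] at this
  have hθlt : |l.arg| < Real.pi / 2 := by
    rw [Complex.abs_arg_lt_pi_div_two_iff]; left; exact hrepos
  have hNle : ‖N₁ l‖ ≤ M := hM l hrepos
  have hlog : Complex.log l = (Real.log (‖l‖) : ℂ) + (l.arg:ℂ) * Complex.I := by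
    apply Complex.ext <;> simp [Complex.log_re, Complex.log_im]
  clear_value l
  obtain ⟨θ, hθdef⟩ : ∃ θ : ℝ, θ = l.arg := ⟨_, rfl⟩
  rw [← hθdef] at hθlt hlog
  obtain ⟨x, hxdef⟩ : ∃ x : ℝ, x = ‖l‖ := ⟨_, rfl⟩
  rw [← hxdef] at habsl hlog
  have hxpos : 0 < x := lt_of_lt_of_le hβpos habsl
  -- K ≤ x^σ
  have hKle : K ≤ x ^ σ := by
    have h1 : K ^ (1/σ) ≤ x := le_trans hβK habsl
    have h2 : (K ^ (1/σ)) ^ σ ≤ x ^ σ := Real.rpow_le_rpow (by positivity) h1 hσ.le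
    have h3 : (K ^ (1/σ)) ^ σ = K := by
      rw [← Real.rpow_mul hK.le, one_div, inv_mul_cancel₀ hσ.ne', Real.rpow_one]
    rwa [h3] at h2
  have hxσ : 0 < x ^ σ := lt_of_lt_of_le hK hKle
  -- Part 1
  have hpart1 : ‖N₁ l‖ < α * x ^ σ := by
    have h1 : M < α * K := by
      have h3 : M / α < K := hKa
      calc M = α * (M / α) := by field_simp
        _ < α * K := mul_lt_mul_of_pos_left h3 hα
    calc ‖N₁ l‖ ≤ M := hNle
      _ < α * K := h1
      _ ≤ α * x ^ σ := mul_le_mul_of_nonneg_left hKle hα.le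
  rw [hxdef] at hpart1
  refine ⟨hpart1, ?_⟩
  rw [← hxdef] at hpart1
  -- Part 2
  set w : ℂ := N₁ l * l ^ (-(σ:ℂ)) with hwdef
  have habsw : ‖w‖ ≤ α * c / 2 := by
    have h0 : ‖l ^ (-(σ:ℂ))‖ = x ^ (-σ) := by
      have he : (-(σ:ℂ)) = ((-σ : ℝ) : ℂ) := by push_cast; ring
      rw [he, Complex.norm_cpow_real, ← hxdef]
    have h1 : ‖w‖ ≤ M * x ^ (-σ) := by
      rw [hwdef, norm_mul, h0]
      exact mul_le_mul_of_nonneg_right hNle (by positivity)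
    have h4 : 2 * M / (α * c) ≤ x ^ σ := hKb.trans hKle
    have h5 : 2 * M ≤ α * c * x ^ σ := by
      rw [div_le_iff₀ (by positivity)] at h4; linarith
    have h6 : M * x ^ (-σ) = M / x ^ σ := by
      rw [Real.rpow_neg hxpos.le]; ring
    have h2 : M * x ^ (-σ) ≤ α * c / 2 := by
      rw [h6, div_le_iff₀ hxσ]; linarith
    linarith
  clear_value w
  have habsw0 : 0 ≤ ‖w‖ := norm_nonneg w
  have hwlt : ‖w‖ ≤ α / 2 := by
    have := mul_le_of_le_one_right hα.le hc1
    linarith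
  set D : ℂ := (α:ℂ) + w with hDdef
  have hwre : -‖w‖ ≤ w.re := (abs_le.1 (Complex.abs_re_le_norm w)).1
  have hDre : D.re = α + w.re := by simp [hDdef]
  have hDim : D.im = w.im := by simp [hDdef]
  clear_value D
  have hDrepos : 0 < D.re := by rw [hDre]; linarith
  have hDne : D ≠ 0 := fun h => by simp [h] at hDrepos
  have habsD : α - ‖w‖ ≤ ‖D‖ :=
    le_trans (by rw [hDre]; linarith) (Complex.re_le_norm D)
  have habsDpos : 0 < ‖D‖ := by linarith
  -- numerator
  obtain ⟨φ, hφdef⟩ : ∃ φ : ℝ, φ = (1 + γ) * θ := ⟨_, rfl⟩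
  obtain ⟨R, hRdef⟩ : ∃ R : ℝ, R = x ^ (1 + γ) := ⟨_, rfl⟩
  have hRpos : 0 < R := hRdef ▸ Real.rpow_pos_of_pos hxpos _
  have hNum : l ^ ((1:ℂ) + (γ:ℂ)) = (R:ℂ) * Complex.exp ((φ:ℂ) * Complex.I) := by
    rw [Complex.cpow_def_of_ne_zero hlne, hlog]
    have he : ((Real.log x : ℂ) + (θ:ℂ) * Complex.I) * ((1:ℂ) + (γ:ℂ))
        = (((1+γ) * Real.log x : ℝ) : ℂ) + ((φ:ℝ):ℂ) * Complex.I := by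
      rw [hφdef]; push_cast; ring
    rw [he, Complex.exp_add]
    congr 1
    rw [← Complex.ofReal_exp]
    norm_cast
    rw [hRdef, Real.rpow_def_of_pos hxpos]
    ring_nf
  -- cos φ lower bound
  have hφle : |φ| ≤ (1 + γ) * (Real.pi / 2) := by
    rw [hφdef, abs_mul, abs_of_pos (by linarith : (0:ℝ) < 1 + γ)]
    exact mul_le_mul_of_nonneg_left hθlt.le (by linarith)
  have hcosφ : -Real.sin (γ * Real.pi / 2) ≤ Real.cos φ := by
    have h1 : Real.cos ((1 + γ) * (Real.pi / 2)) ≤ Real.cos |φ| :=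
      Real.cos_le_cos_of_nonneg_of_le_pi (abs_nonneg _)
        (by
          have := mul_le_mul_of_nonneg_right (show (1+γ:ℝ) ≤ 2 by linarith)
            (by positivity : (0:ℝ) ≤ Real.pi / 2)
          linarith) hφle
    have h2 : Real.cos ((1 + γ) * (Real.pi / 2)) = -Real.sin (γ * Real.pi / 2) := by
      have he : (1 + γ) * (Real.pi / 2) = Real.pi / 2 + γ * Real.pi / 2 := by ring
      rw [he, Real.cos_add, Real.cos_pi_div_two, Real.sin_pi_div_two]; ring
    rw [Real.cos_abs] at h1; linarith [h2 ▸ h1]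
  -- key inequality
  have hkey : -(Real.cos δ * ‖D‖) ≤ Real.cos φ * D.re + Real.sin φ * D.im := by
    have hip : -(‖w‖) ≤ Real.cos φ * w.re + Real.sin φ * w.im := by
      have hsq : ‖w‖ ^ 2 = w.re ^ 2 + w.im ^ 2 := by
        rw [Complex.sq_norm, Complex.normSq_apply]; ring
      exact aux_neg_le _ _ (by rw [hsq]; exact aux_cs φ w.re w.im) habsw0
    have h3 : Real.cos δ * (α - ‖w‖) ≤ Real.cos δ * ‖D‖ :=
      mul_le_mul_of_nonneg_left habsD hcosδ.le
    have h4 : α * Real.sin (γ * Real.pi / 2) + ‖w‖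
        ≤ Real.cos δ * (α - ‖w‖) := by
      have h6 : ‖w‖ * Real.cos δ ≤ ‖w‖ :=
        mul_le_of_le_one_right habsw0 hcosδ1
      have h7 : ‖w‖ * (1 + Real.cos δ) ≤ α * c := by linarith
      rw [hcdef] at h7; nlinarith [h7]
    have h5 : -(α * Real.sin (γ * Real.pi / 2)) ≤ α * Real.cos φ := by
      have := mul_le_mul_of_nonneg_left hcosφ hα.le
      linarith
    rw [hDre, hDim]; linarith
  -- assemble
  have hζ : ((l ^ ((1:ℂ) + (γ:ℂ)) / D).re)
      = (R * Real.cos φ * D.re + R * Real.sin φ * D.im) / Complex.normSq D := by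
    rw [hNum, Complex.div_re]
    have hexp : Complex.exp ((φ:ℂ) * Complex.I)
        = (Real.cos φ : ℂ) + (Real.sin φ : ℂ) * Complex.I := by
      rw [Complex.exp_mul_I, Complex.ofReal_cos, Complex.ofReal_sin]
    have hNre : ((R:ℂ) * Complex.exp ((φ:ℂ) * Complex.I)).re = R * Real.cos φ := by
      rw [hexp]; simp [Complex.cos_ofReal_re, Complex.sin_ofReal_re]
    have hNim : ((R:ℂ) * Complex.exp ((φ:ℂ) * Complex.I)).im = R * Real.sin φ := by
      rw [hexp]; simp [Complex.cos_ofReal_re, Complex.sin_ofReal_re]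
    rw [hNre, hNim]; ring
  have habsζ : ‖l ^ ((1:ℂ) + (γ:ℂ)) / D‖ = R / ‖D‖ := by
    rw [hNum, norm_div, norm_mul, Complex.norm_exp_ofReal_mul_I, Complex.norm_real,
      Real.norm_of_nonneg hRpos.le, mul_one]
  rw [hζ, habsζ]
  have hnsq : Complex.normSq D = ‖D‖ * ‖D‖ := by
    rw [Complex.normSq_eq_norm_sq]; ring
  have hfinal : -(R / ‖D‖ * Real.cos δ)
      = (R * -(Real.cos δ * ‖D‖)) / Complex.normSq D := by
    rw [hnsq]; field_simp
  rw [hfinal]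
  have hnum : R * -(Real.cos δ * ‖D‖)
      ≤ R * Real.cos φ * D.re + R * Real.sin φ * D.im := by
    have := mul_le_mul_of_nonneg_left hkey hRpos.le
    linarith [this]
  gcongr
  rw [hnsq]; positivity
end

section
/- Let N : (0,∞) → ℝ be locally integrable, n a positive integer, ξ ∈ ℝ, and let g : [0,∞) → ℝ be continuous with f(t) = ∫₀^t g(s) ds. Let z : [0,∞) → ℝ be locally absolutely continuous with z(0) = 1 and z'(t) = −n² ∫₀^t N(t−s) z(s) ds for almost every t. Define θ(t) = ξ·z(t) + n ∫₀^t z(t−s) (∫₀^s N(s−r) f(r) dr) ds. Then θ(0) = ξ and θ is locally absolutely continuous with θ'(t) = −n² ∫₀^t N(t−s) θ(s) ds + n ∫₀^t N(t−s) f(s) ds for almost every t (variation of constants formula). -/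
open MeasureTheory Set

namespace VOCHelpers

/-- local integrability on all `Ioc 0 T` -/
def LocInt (u : ℝ → ℝ) : Prop := ∀ T : ℝ, 0 < T → IntegrableOn u (Ioc 0 T) volume




lemma preim_reflect (t : ℝ) : (fun x : ℝ => t - x) ⁻¹' (Ico 0 t) = Ioc 0 t := by
  ext x
  simp only [mem_preimage, mem_Ico, mem_Ioc]
  constructor
  · rintro ⟨h1, h2⟩; constructor <;> linarith
  · rintro ⟨h1, h2⟩; constructor <;> linarith

lemma emb_reflect (t : ℝ) : MeasurableEmbedding (fun x : ℝ => t - x) :=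
  (Homeomorph.toMeasurableEquiv ⟨⟨fun x => t - x, fun x => t - x, by intro x; simp, by intro x; simp⟩,
    by continuity, by continuity⟩).measurableEmbedding



lemma reflect_integrableOn {u : ℝ → ℝ} (hloc : LocInt u) {s : ℝ} (hs : 0 < s) :
    IntegrableOn (fun r => u (s - r)) (Ioc 0 s) volume := by
  have h1 : IntegrableOn u (Ico 0 s) volume :=
    (hloc s hs).congr_set_ae Ico_ae_eq_Ioc
  have := (Measure.measurePreserving_sub_left (volume : Measure ℝ) s).integrableOn_comp_preimage
    (emb_reflect s) (f := u) (s := Ico 0 s)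
  rw [preim_reflect s] at this
  exact this.2 h1

lemma reflect_ae {p : ℝ → Prop} (t : ℝ) (hp : ∀ᵐ x ∂(volume : Measure ℝ), x ∈ Ioi (0:ℝ) → p x) :
    ∀ᵐ s ∂(volume : Measure ℝ), s ∈ Ioo (0:ℝ) t → p (t - s) := by
  have h := (Measure.measurePreserving_sub_left (volume : Measure ℝ) t).quasiMeasurePreserving.ae hp
  filter_upwards [h] with s hs hmem
  exact hs (by simp only [mem_Ioi]; linarith [hmem.2])

lemma ae_ne_pt (t : ℝ) : ∀ᵐ s ∂(volume : Measure ℝ), s ≠ t := by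
  rw [ae_iff]
  have : {s : ℝ | ¬ s ≠ t} = {t} := by ext s; simp [Classical.not_not]
  rw [this]; simp

/-- replace `u` by `u'` (a.e. equal on `Ioi 0`) inside a reflected convolution integral -/
lemma integral_reflect_congr {u u' : ℝ → ℝ}
    (h : ∀ᵐ x ∂(volume : Measure ℝ), x ∈ Ioi (0:ℝ) → u x = u' x) (v : ℝ → ℝ) {t : ℝ} (ht : 0 ≤ t) :
    ∫ s in (0:ℝ)..t, u (t - s) * v s = ∫ s in (0:ℝ)..t, u' (t - s) * v s := by
  apply intervalIntegral.integral_congr_ae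
  filter_upwards [reflect_ae t h, ae_ne_pt t] with s hs hst hmem
  rw [uIoc_of_le ht] at hmem
  rw [hs ⟨hmem.1, lt_of_le_of_ne hmem.2 hst⟩]





lemma inter_Iic {t s : ℝ} (hs : s ∈ Ioc 0 t) : Ioc (0:ℝ) t ∩ Iic s = Ioc 0 s := by
  ext x
  simp only [mem_inter_iff, mem_Ioc, mem_Iic]
  constructor
  · rintro ⟨⟨h1, h2⟩, h3⟩; exact ⟨h1, h3⟩
  · rintro ⟨h1, h2⟩; exact ⟨⟨h1, le_trans h2 hs.2⟩, h2⟩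

lemma inter_Ici {t r : ℝ} (hr : r ∈ Ioc 0 t) : Ioc (0:ℝ) t ∩ Ici r = Icc r t := by
  ext x
  simp only [mem_inter_iff, mem_Ioc, mem_Icc, mem_Ici]
  constructor
  · rintro ⟨⟨h1, h2⟩, h3⟩; exact ⟨h3, h2⟩
  · rintro ⟨h1, h2⟩; exact ⟨⟨lt_of_lt_of_le hr.1 h1, h2⟩, h1⟩

lemma swap_tri {t : ℝ} {F : ℝ → ℝ → ℝ}
    (hFi : Integrable
      (fun p : ℝ × ℝ => {q : ℝ × ℝ | q.2 ≤ q.1}.indicator (fun q => F q.1 q.2) p)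
      ((volume.restrict (Ioc 0 t)).prod (volume.restrict (Ioc 0 t)))) :
    ∫ s in Ioc (0:ℝ) t, ∫ r in Ioc (0:ℝ) s, F s r =
    ∫ r in Ioc (0:ℝ) t, ∫ s in Ioc r t, F s r := by
  have hind : ∀ s r : ℝ, {q : ℝ × ℝ | q.2 ≤ q.1}.indicator (fun q => F q.1 q.2) (s, r)
      = (Iic s).indicator (F s) r := by
    intro s r
    by_cases h : r ≤ s
    · rw [indicator_of_mem (by exact h) _, indicator_of_mem (by exact h) _]
    · rw [indicator_of_notMem (by exact h) _, indicator_of_notMem (by exact h) _]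
  have hind2 : ∀ s r : ℝ, (Iic s).indicator (F s) r = (Ici r).indicator (fun s' => F s' r) s := by
    intro s r
    by_cases h : r ≤ s
    · rw [indicator_of_mem (by exact h) _, indicator_of_mem (by exact h) _]
    · rw [indicator_of_notMem (by exact h) _, indicator_of_notMem (by exact h) _]
  have key := integral_integral_swap (μ := volume.restrict (Ioc (0:ℝ) t))
      (ν := volume.restrict (Ioc (0:ℝ) t)) (f := fun s r => (Iic s).indicator (F s) r)
      (by
        apply hFi.congr
        refine Filter.Eventually.of_forall (fun p => ?_)
        simpa [Function.uncurry] using (hind p.1 p.2))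
  calc ∫ s in Ioc (0:ℝ) t, ∫ r in Ioc (0:ℝ) s, F s r
      = ∫ s in Ioc (0:ℝ) t, ∫ r in Ioc (0:ℝ) t, (Iic s).indicator (F s) r := by
        apply setIntegral_congr_fun measurableSet_Ioc
        intro s hs
        dsimp only
        rw [setIntegral_indicator measurableSet_Iic, inter_Iic hs]
    _ = ∫ r in Ioc (0:ℝ) t, ∫ s in Ioc (0:ℝ) t, (Iic s).indicator (F s) r := key
    _ = ∫ r in Ioc (0:ℝ) t, ∫ s in Ioc r t, F s r := by
        apply setIntegral_congr_fun measurableSet_Ioc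
        intro r hr
        dsimp only
        simp_rw [hind2]
        rw [setIntegral_indicator measurableSet_Ici, inter_Ici hr,
          setIntegral_congr_set (Ioc_ae_eq_Icc).symm]





lemma hK : MeasurableSet {q : ℝ × ℝ | q.2 ≤ q.1} := measurableSet_le measurable_snd measurable_fst

lemma hindK (F : ℝ → ℝ → ℝ) (s r : ℝ) :
    {q : ℝ × ℝ | q.2 ≤ q.1}.indicator (fun q => F q.1 q.2) (s, r)
      = (Iic s).indicator (F s) r := by
  by_cases h : r ≤ s
  · rw [indicator_of_mem (by exact h) _, indicator_of_mem (by exact h) _]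
  · rw [indicator_of_notMem (by exact h) _, indicator_of_notMem (by exact h) _]

lemma tri_int_1 {u v : ℝ → ℝ} (hu : StronglyMeasurable u) (hloc : LocInt u)
    (hv : Continuous v) {t : ℝ} (ht : 0 < t) :
    Integrable
      (fun p : ℝ × ℝ => {q : ℝ × ℝ | q.2 ≤ q.1}.indicator
        (fun q => u (q.1 - q.2) * v q.2) p)
      ((volume.restrict (Ioc 0 t)).prod (volume.restrict (Ioc 0 t))) := by
  obtain ⟨M, hM⟩ : ∃ M, ∀ y ∈ Icc (0:ℝ) t, ‖v y‖ ≤ M :=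
    isCompact_Icc.exists_bound_of_continuousOn hv.continuousOn
  have hFm : AEStronglyMeasurable
      (fun p : ℝ × ℝ => {q : ℝ × ℝ | q.2 ≤ q.1}.indicator
        (fun q => u (q.1 - q.2) * v q.2) p)
      ((volume.restrict (Ioc 0 t)).prod (volume.restrict (Ioc 0 t))) :=
    (((hu.comp_measurable (measurable_fst.sub measurable_snd)).mul
      (hv.stronglyMeasurable.comp_measurable measurable_snd)).indicator hK).aestronglyMeasurable
  rw [integrable_prod_iff hFm]
  constructor
  · filter_upwards [ae_restrict_mem measurableSet_Ioc] with s hs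
    have heq : (fun r => {q : ℝ × ℝ | q.2 ≤ q.1}.indicator
        (fun q => u (q.1 - q.2) * v q.2) (s, r))
        = fun r => (Iic s).indicator (fun r => u (s - r) * v r) r := by
      funext r; exact hindK (fun a b => u (a - b) * v b) s r
    rw [heq, integrable_indicator_iff measurableSet_Iic]
    have hsub : Iic s ∩ Ioc 0 t = Ioc 0 s := by rw [inter_comm]; exact inter_Iic hs
    rw [IntegrableOn, Measure.restrict_restrict measurableSet_Iic, hsub]
    apply Integrable.mono' (((reflect_integrableOn hloc hs.1).norm).mul_const M)
    · exact ((hu.comp_measurable (measurable_const.sub measurable_id)).mul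
        hv.stronglyMeasurable).aestronglyMeasurable
    · filter_upwards [ae_restrict_mem measurableSet_Ioc] with r hr
      rw [norm_mul]
      exact mul_le_mul_of_nonneg_left
        (hM r ⟨hr.1.le, hr.2.trans hs.2⟩) (norm_nonneg _) |>.trans
        (le_of_eq rfl)
  · apply Integrable.mono' (g := fun _ => (∫ x in Ioc (0:ℝ) t, ‖u x‖) * M)
      (integrable_const _)
    · exact hFm.norm.integral_prod_right'
    · filter_upwards [ae_restrict_mem measurableSet_Ioc] with s hs
      have hnn : 0 ≤ ∫ r in Ioc (0:ℝ) t, ‖{q : ℝ × ℝ | q.2 ≤ q.1}.indicator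
          (fun q => u (q.1 - q.2) * v q.2) (s, r)‖ :=
        integral_nonneg (fun r => norm_nonneg _)
      rw [Real.norm_of_nonneg hnn]
      have heq : ∀ r : ℝ, ‖{q : ℝ × ℝ | q.2 ≤ q.1}.indicator
          (fun q => u (q.1 - q.2) * v q.2) (s, r)‖
          = (Iic s).indicator (fun r => ‖u (s - r) * v r‖) r := by
        intro r
        rw [hindK (fun a b => u (a - b) * v b) s r, norm_indicator_eq_indicator_norm]
      calc ∫ r in Ioc (0:ℝ) t, ‖{q : ℝ × ℝ | q.2 ≤ q.1}.indicator
            (fun q => u (q.1 - q.2) * v q.2) (s, r)‖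
          = ∫ r in Ioc (0:ℝ) s, ‖u (s - r) * v r‖ := by
            simp_rw [heq]
            rw [setIntegral_indicator measurableSet_Iic, inter_Iic hs]
        _ ≤ ∫ r in Ioc (0:ℝ) s, ‖u (s - r)‖ * M := by
            have hgint : IntegrableOn (fun r => u (s - r) * v r) (Ioc 0 s) volume := by
              apply Integrable.mono' (((reflect_integrableOn hloc hs.1).norm).mul_const M)
              · exact ((hu.comp_measurable (measurable_const.sub measurable_id)).mul
                  hv.stronglyMeasurable).aestronglyMeasurable
              · filter_upwards [ae_restrict_mem measurableSet_Ioc] with r hr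
                rw [norm_mul]
                exact mul_le_mul_of_nonneg_left
                  (hM r ⟨hr.1.le, hr.2.trans hs.2⟩) (norm_nonneg _)
            apply setIntegral_mono_on
            · exact hgint.norm
            · exact ((reflect_integrableOn hloc hs.1).norm).mul_const M
            · exact measurableSet_Ioc
            · intro r hr
              rw [norm_mul]
              exact mul_le_mul_of_nonneg_left (hM r ⟨hr.1.le, hr.2.trans hs.2⟩) (norm_nonneg _)
        _ = (∫ r in Ioc (0:ℝ) s, ‖u (s - r)‖) * M := by rw [integral_mul_const]
        _ ≤ (∫ x in Ioc (0:ℝ) t, ‖u x‖) * M := by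
            apply mul_le_mul_of_nonneg_right _ (le_trans (norm_nonneg (v 0)) (hM 0 ⟨le_refl _, ht.le⟩))
            have e2 : ∫ r in Ioc (0:ℝ) s, ‖u (s - r)‖ = ∫ x in Ico (0:ℝ) s, ‖u x‖ := by
              have := (Measure.measurePreserving_sub_left (volume : Measure ℝ) s).setIntegral_preimage_emb
                (emb_reflect s) (fun x => ‖u x‖) (Ico 0 s)
              rw [preim_reflect s] at this
              exact this
            rw [e2, setIntegral_congr_set (Ico_ae_eq_Ioc)]
            apply setIntegral_mono_set (hloc t ht).norm
              (Filter.Eventually.of_forall (fun x => norm_nonneg _))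
              (HasSubset.Subset.eventuallyLE (Ioc_subset_Ioc_right hs.2))





lemma tri_int_2 {u v w : ℝ → ℝ} (hu : StronglyMeasurable u) (hloc : LocInt u)
    (hv : Continuous v) (hw : Continuous w) {t : ℝ} (ht : 0 < t) :
    Integrable
      (fun p : ℝ × ℝ => {q : ℝ × ℝ | q.2 ≤ q.1}.indicator
        (fun q => u (t - q.1) * (v (q.1 - q.2) * w q.2)) p)
      ((volume.restrict (Ioc 0 t)).prod (volume.restrict (Ioc 0 t))) := by
  obtain ⟨M, hM⟩ : ∃ M, ∀ y ∈ Icc (0:ℝ) t, ‖v y‖ ≤ M :=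
    isCompact_Icc.exists_bound_of_continuousOn hv.continuousOn
  obtain ⟨M', hM'⟩ : ∃ M', ∀ y ∈ Icc (0:ℝ) t, ‖w y‖ ≤ M' :=
    isCompact_Icc.exists_bound_of_continuousOn hw.continuousOn
  have hMnn : 0 ≤ M := le_trans (norm_nonneg (v 0)) (hM 0 ⟨le_refl _, ht.le⟩)
  have hM'nn : 0 ≤ M' := le_trans (norm_nonneg (w 0)) (hM' 0 ⟨le_refl _, ht.le⟩)
  have hFm : AEStronglyMeasurable
      (fun p : ℝ × ℝ => {q : ℝ × ℝ | q.2 ≤ q.1}.indicator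
        (fun q => u (t - q.1) * (v (q.1 - q.2) * w q.2)) p)
      ((volume.restrict (Ioc 0 t)).prod (volume.restrict (Ioc 0 t))) :=
    (((hu.comp_measurable (measurable_const.sub measurable_fst)).mul
      (((hv.comp (continuous_fst.sub continuous_snd)).mul
        (hw.comp continuous_snd)).stronglyMeasurable)).indicator hK).aestronglyMeasurable
  rw [integrable_prod_iff hFm]
  constructor
  · filter_upwards [ae_restrict_mem measurableSet_Ioc] with s hs
    have heq : (fun r => {q : ℝ × ℝ | q.2 ≤ q.1}.indicator
        (fun q => u (t - q.1) * (v (q.1 - q.2) * w q.2)) (s, r))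
        = fun r => (Iic s).indicator (fun r => u (t - s) * (v (s - r) * w r)) r := by
      funext r; exact hindK (fun a b => u (t - a) * (v (a - b) * w b)) s r
    rw [heq, integrable_indicator_iff measurableSet_Iic, IntegrableOn,
      Measure.restrict_restrict measurableSet_Iic]
    have hcont : Continuous (fun r => u (t - s) * (v (s - r) * w r)) :=
      continuous_const.mul (((hv.comp (continuous_const.sub continuous_id)).mul hw))
    exact (hcont.integrableOn_Ioc (a := 0) (b := t)).mono_set inter_subset_right
  · apply Integrable.mono'
      (g := fun s => ‖u (t - s)‖ * (M * M' * t))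
      (((reflect_integrableOn hloc ht).norm).mul_const _)
    · exact hFm.norm.integral_prod_right'
    · filter_upwards [ae_restrict_mem measurableSet_Ioc] with s hs
      have hnn : 0 ≤ ∫ r in Ioc (0:ℝ) t, ‖{q : ℝ × ℝ | q.2 ≤ q.1}.indicator
          (fun q => u (t - q.1) * (v (q.1 - q.2) * w q.2)) (s, r)‖ :=
        integral_nonneg (fun r => norm_nonneg _)
      rw [Real.norm_of_nonneg hnn]
      calc ∫ r in Ioc (0:ℝ) t, ‖{q : ℝ × ℝ | q.2 ≤ q.1}.indicator
            (fun q => u (t - q.1) * (v (q.1 - q.2) * w q.2)) (s, r)‖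
          ≤ ∫ _r in Ioc (0:ℝ) t, ‖u (t - s)‖ * (M * M') := by
            apply setIntegral_mono_on
            · -- integrable: norm of integrable (from part one argument)
              have heq : (fun r => {q : ℝ × ℝ | q.2 ≤ q.1}.indicator
                  (fun q => u (t - q.1) * (v (q.1 - q.2) * w q.2)) (s, r))
                  = fun r => (Iic s).indicator (fun r => u (t - s) * (v (s - r) * w r)) r := by
                funext r; exact hindK (fun a b => u (t - a) * (v (a - b) * w b)) s r
              have heq2 : (fun r => ‖{q : ℝ × ℝ | q.2 ≤ q.1}.indicator
                  (fun q => u (t - q.1) * (v (q.1 - q.2) * w q.2)) (s, r)‖)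
                  = fun r => ‖(Iic s).indicator (fun r => u (t - s) * (v (s - r) * w r)) r‖ := by
                funext r; rw [hindK (fun a b => u (t - a) * (v (a - b) * w b)) s r]
              rw [heq2]
              apply Integrable.norm
              rw [integrable_indicator_iff measurableSet_Iic, IntegrableOn,
                Measure.restrict_restrict measurableSet_Iic]
              have hcont : Continuous (fun r => u (t - s) * (v (s - r) * w r)) :=
                continuous_const.mul (((hv.comp (continuous_const.sub continuous_id)).mul hw))
              exact (hcont.integrableOn_Ioc (a := 0) (b := t)).mono_set inter_subset_right
            · exact integrable_const _
            · exact measurableSet_Ioc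
            · intro r hr
              rw [hindK (fun a b => u (t - a) * (v (a - b) * w b)) s r]
              by_cases hrs : r ≤ s
              · rw [indicator_of_mem (by exact hrs) _]
                rw [norm_mul, norm_mul]
                apply mul_le_mul_of_nonneg_left _ (norm_nonneg _)
                apply mul_le_mul (hM _ ⟨by linarith [hr.1], by linarith [hs.2, hr.1]⟩)
                  (hM' _ ⟨hr.1.le, hr.2⟩) (norm_nonneg _) hMnn
              · rw [indicator_of_notMem (by exact hrs) _]
                simp only [norm_zero]
                positivity
        _ = ‖u (t - s)‖ * (M * M') * (volume (Ioc (0:ℝ) t)).toReal := by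
            rw [setIntegral_const, smul_eq_mul, mul_comm]; rfl
        _ = ‖u (t - s)‖ * (M * M' * t) := by
            rw [Real.volume_Ioc, sub_zero, ENNReal.toReal_ofReal ht.le, mul_assoc]
  




lemma conv_cont {u v : ℝ → ℝ} (hu : StronglyMeasurable u) (hloc : LocInt u)
    (hv : Continuous v) :
    ContinuousOn (fun t => ∫ x in (0:ℝ)..t, u x * v (t - x)) (Ici 0) := by
  intro t₀ ht₀
  have ht₀' : (0:ℝ) ≤ t₀ := ht₀
  set T : ℝ := t₀ + 1 with hT
  have hTpos : 0 < T := by linarith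
  obtain ⟨M, hM⟩ : ∃ M, ∀ y ∈ Icc (-(T + 2)) T, ‖v y‖ ≤ M :=
    isCompact_Icc.exists_bound_of_continuousOn hv.continuousOn
  set Φ : ℝ → ℝ := fun t =>
    ∫ x in Ioc (0:ℝ) T, (Ioc (0:ℝ) t).indicator (fun x' => u x' * v (t - x')) x with hΦdef
  have hΦ : ContinuousAt Φ t₀ := by
    apply continuousAt_of_dominated (bound := fun x => ‖u x‖ * M)
    · exact Filter.Eventually.of_forall (fun t =>
        ((hu.mul ((hv.comp (continuous_const.sub continuous_id)).stronglyMeasurable)).indicator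
          measurableSet_Ioc).aestronglyMeasurable)
    · filter_upwards [Ioo_mem_nhds (by linarith : t₀ - 1 < t₀) (by linarith : t₀ < t₀ + 1)]
        with t htI
      filter_upwards [ae_restrict_mem measurableSet_Ioc] with x hx
      by_cases hxt : x ∈ Ioc (0:ℝ) t
      · rw [indicator_of_mem hxt]
        rw [norm_mul]
        apply mul_le_mul_of_nonneg_left _ (norm_nonneg _)
        apply hM
        constructor
        · have := hx.2; have := htI.1; linarith
        · have := hxt.1; have := htI.2; linarith
      · rw [indicator_of_notMem hxt]
        simp only [norm_zero]
        have : 0 ≤ M := le_trans (norm_nonneg (v 0)) (hM 0 ⟨by linarith, hTpos.le⟩)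
        positivity
    · exact ((hloc T hTpos).norm.mul_const M)
    · filter_upwards [ae_restrict_mem measurableSet_Ioc, ae_restrict_of_ae (ae_ne_pt t₀)]
        with x hx hxne
      rcases lt_or_gt_of_ne hxne with hlt | hgt
      · have hev : (fun t => u x * v (t - x)) =ᶠ[nhds t₀]
            (fun t => (Ioc (0:ℝ) t).indicator (fun x' => u x' * v (t - x')) x) := by
          filter_upwards [Ioi_mem_nhds hlt] with t ht
          exact (indicator_of_mem (show x ∈ Ioc (0:ℝ) t from ⟨hx.1, le_of_lt ht⟩) (fun x' => u x' * v (t - x'))).symm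
        exact ContinuousAt.congr
          (continuous_const.mul (hv.comp (continuous_id.sub continuous_const))).continuousAt hev
      · have hev : (fun _ : ℝ => (0:ℝ)) =ᶠ[nhds t₀]
            (fun t => (Ioc (0:ℝ) t).indicator (fun x' => u x' * v (t - x')) x) := by
          filter_upwards [Iio_mem_nhds hgt] with t ht
          exact (indicator_of_notMem (fun hmem => absurd hmem.2 (not_le.2 ht)) (fun x' => u x' * v (t - x'))).symm
        exact ContinuousAt.congr continuousAt_const hev
  have hagree : ∀ t, 0 ≤ t → t ≤ T →
      (∫ x in (0:ℝ)..t, u x * v (t - x)) = Φ t := by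
    intro t ht0 htT
    rw [intervalIntegral.integral_of_le ht0, hΦdef]
    show _ = ∫ x in Ioc (0:ℝ) T, (Ioc (0:ℝ) t).indicator (fun x' => u x' * v (t - x')) x
    rw [setIntegral_indicator measurableSet_Ioc]
    have hset : Ioc (0:ℝ) T ∩ Ioc (0:ℝ) t = Ioc 0 t := by
      ext x
      simp only [mem_inter_iff, mem_Ioc]
      constructor
      · rintro ⟨⟨h1, h2⟩, h3⟩; exact ⟨h1, h3.2⟩
      · rintro ⟨h1, h2⟩; exact ⟨⟨h1, h2.trans htT⟩, ⟨h1, h2⟩⟩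
    rw [hset]
  apply (hΦ.continuousWithinAt (s := Ici 0)).congr_of_eventuallyEq
  · have h1 : Iio T ∈ nhdsWithin t₀ (Ici 0) :=
      nhdsWithin_le_nhds (Iio_mem_nhds (by linarith))
    filter_upwards [h1, self_mem_nhdsWithin] with t ht hmem
    exact hagree t hmem ht.le
  · exact hagree t₀ ht₀' (by linarith)




lemma flip_conv (u v : ℝ → ℝ) (s : ℝ) :
    ∫ r in (0:ℝ)..s, u (s - r) * v r = ∫ x in (0:ℝ)..s, u x * v (s - x) := by
  have h : ∀ r : ℝ, u (s - r) * v r = (fun x => u x * v (s - x)) (s - r) := by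
    intro r
    show _ = u (s - r) * v (s - (s - r))
    rw [show s - (s - r) = r by ring]
  rw [intervalIntegral.integral_congr (g := fun r => (fun x => u x * v (s - x)) (s - r))
    (fun r _ => h r)]
  rw [intervalIntegral.integral_comp_sub_left (fun x => u x * v (s - x)) s, sub_self, sub_zero]

lemma cont_locint {v : ℝ → ℝ} (hv : Continuous v) : LocInt v :=
  fun T _ => hv.integrableOn_Ioc

lemma reflect_mul_cont {u v : ℝ → ℝ} (hu : StronglyMeasurable u) (hloc : LocInt u)
    (hv : Continuous v) {t : ℝ} (ht : 0 < t) :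
    IntegrableOn (fun s => u (t - s) * v s) (Ioc 0 t) volume := by
  obtain ⟨M, hM⟩ : ∃ M, ∀ y ∈ Icc (0:ℝ) t, ‖v y‖ ≤ M :=
    isCompact_Icc.exists_bound_of_continuousOn hv.continuousOn
  apply Integrable.mono' (((reflect_integrableOn hloc ht).norm).mul_const M)
  · exact ((hu.comp_measurable (measurable_const.sub measurable_id)).mul
      hv.stronglyMeasurable).aestronglyMeasurable
  · filter_upwards [ae_restrict_mem measurableSet_Ioc] with r hr
    rw [norm_mul]
    exact mul_le_mul_of_nonneg_left (hM r ⟨hr.1.le, hr.2⟩) (norm_nonneg _)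




lemma fub' {u v : ℝ → ℝ} (hu : StronglyMeasurable u) (hloc : LocInt u)
    (hv : Continuous v) {t : ℝ} (ht : 0 ≤ t) :
    ∫ s in (0:ℝ)..t, (∫ r in (0:ℝ)..s, u (s - r) * v r) =
    ∫ r in (0:ℝ)..t, (∫ y in (0:ℝ)..(t - r), u y) * v r := by
  rcases eq_or_lt_of_le ht with rfl | htpos
  · simp
  rw [intervalIntegral.integral_of_le ht, intervalIntegral.integral_of_le ht]
  have step1 : ∫ s in Ioc (0:ℝ) t, (∫ r in (0:ℝ)..s, u (s - r) * v r) =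
      ∫ s in Ioc (0:ℝ) t, ∫ r in Ioc (0:ℝ) s, u (s - r) * v r := by
    apply setIntegral_congr_fun measurableSet_Ioc
    intro s hs
    exact intervalIntegral.integral_of_le hs.1.le
  rw [step1, swap_tri (tri_int_1 hu hloc hv htpos)]
  apply setIntegral_congr_fun measurableSet_Ioc
  intro r hr
  dsimp only
  rw [integral_mul_const]
  congr 1
  rw [← intervalIntegral.integral_of_le hr.2]
  rw [intervalIntegral.integral_comp_sub_right u r, sub_self]

lemma assoc_conv {u v w : ℝ → ℝ} (hu : StronglyMeasurable u) (hloc : LocInt u)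
    (hv : Continuous v) (hw : Continuous w) {t : ℝ} (ht : 0 ≤ t) :
    ∫ r in (0:ℝ)..t, (∫ y in (0:ℝ)..(t - r), u y * v (t - r - y)) * w r =
    ∫ s in (0:ℝ)..t, u (t - s) * (∫ r in (0:ℝ)..s, v (s - r) * w r) := by
  rcases eq_or_lt_of_le ht with rfl | htpos
  · simp
  rw [intervalIntegral.integral_of_le ht, intervalIntegral.integral_of_le ht]
  have step1 : ∫ s in Ioc (0:ℝ) t, u (t - s) * (∫ r in (0:ℝ)..s, v (s - r) * w r) =
      ∫ s in Ioc (0:ℝ) t, ∫ r in Ioc (0:ℝ) s, u (t - s) * (v (s - r) * w r) := by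
    apply setIntegral_congr_fun measurableSet_Ioc
    intro s hs
    dsimp only
    rw [intervalIntegral.integral_of_le hs.1.le, integral_const_mul]
  rw [step1, swap_tri (tri_int_2 hu hloc hv hw htpos)]
  apply setIntegral_congr_fun measurableSet_Ioc
  intro r hr
  dsimp only
  have e0 : ∀ s : ℝ, u (t - s) * (v (s - r) * w r) = ((fun x => u (t - r - x) * v x) (s - r)) * w r := by
    intro s
    show _ = u (t - r - (s - r)) * v (s - r) * w r
    rw [show t - r - (s - r) = t - s by ring, mul_assoc]
  simp_rw [e0]
  rw [integral_mul_const]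
  congr 1
  rw [← intervalIntegral.integral_of_le hr.2]
  rw [intervalIntegral.integral_comp_sub_right (fun x => u (t - r - x) * v x) r, sub_self]
  have e1 : ∀ x : ℝ, u (t - r - x) * v x = (fun y => u y * v (t - r - y)) (t - r - x) := by
    intro x
    show _ = u (t - r - x) * v (t - r - (t - r - x))
    rw [show t - r - (t - r - x) = x by ring]
  rw [intervalIntegral.integral_congr (g := fun x => (fun y => u y * v (t - r - y)) ((t - r) - x))
    (fun x _ => e1 x)]
  rw [intervalIntegral.integral_comp_sub_left (fun y => u y * v (t - r - y)) (t - r)]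
  rw [sub_self, sub_zero]




end VOCHelpers

open VOCHelpers

/-- Variation of constants formula: if `z' = −n² N∗z`, `z(0) = 1`, and
`θ(t) = ξ z(t) + n ∫₀^t z(t−s)(∫₀^s N(s−r) f(r) dr) ds` where
`f(t) = ∫₀^t g(s) ds` with `g` continuous, then `θ(0) = ξ`, `θ` is locally
absolutely continuous and
`θ'(t) = −n² ∫₀^t N(t−s) θ(s) ds + n ∫₀^t N(t−s) f(s) ds` a.e. -/
theorem variation_of_constants (N z z' : ℝ → ℝ) (n : ℕ) (hn : 0 < n) (ξ : ℝ)
    (g : ℝ → ℝ) (hg : Continuous g) (f : ℝ → ℝ)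
    (hf : ∀ t : ℝ, f t = ∫ s in (0 : ℝ)..t, g s)
    (hNloc : ∀ T : ℝ, 0 < T → IntegrableOn N (Ioc 0 T))
    (hz'loc : ∀ T : ℝ, 0 < T → IntegrableOn z' (Ioc 0 T))
    (hz0 : z 0 = 1)
    (hrep : ∀ t : ℝ, 0 ≤ t → z t = 1 + ∫ s in (0 : ℝ)..t, z' s)
    (heqz : ∀ᵐ t ∂(volume.restrict (Ioi (0 : ℝ))),
      z' t = -(n : ℝ) ^ 2 * ∫ s in (0 : ℝ)..t, N (t - s) * z s)
    (θ : ℝ → ℝ)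
    (hθ : ∀ t : ℝ, θ t = ξ * z t
      + n * ∫ s in (0 : ℝ)..t, z (t - s) * ∫ r in (0 : ℝ)..s, N (s - r) * f r) :
    θ 0 = ξ ∧
    ∃ θ' : ℝ → ℝ,
      (∀ T : ℝ, 0 < T → IntegrableOn θ' (Ioc 0 T)) ∧
      (∀ t : ℝ, 0 ≤ t → θ t = ξ + ∫ s in (0 : ℝ)..t, θ' s) ∧
      (∀ᵐ t ∂(volume.restrict (Ioi (0 : ℝ))),
        θ' t = -(n : ℝ) ^ 2 * (∫ s in (0 : ℝ)..t, N (t - s) * θ s)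
          + n * ∫ s in (0 : ℝ)..t, N (t - s) * f s) := by
  -- measurable representative of N
  have hIoiUnion : Ioi (0:ℝ) = ⋃ k : ℕ, Ioc 0 ((k:ℝ) + 1) := by
    ext x
    simp only [mem_Ioi, mem_iUnion, mem_Ioc]
    constructor
    · intro hx
      obtain ⟨k, hk⟩ := exists_nat_ge x
      exact ⟨k, hx, by push_cast; linarith⟩
    · rintro ⟨k, h1, _⟩; exact h1
  have hNaesm : AEStronglyMeasurable N (volume.restrict (Ioi (0:ℝ))) := by
    rw [hIoiUnion, aestronglyMeasurable_iUnion_iff]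
    intro k
    exact (hNloc (k + 1) (by positivity)).aestronglyMeasurable
  set N₀ : ℝ → ℝ := hNaesm.mk N with hN₀def
  have hN₀m : StronglyMeasurable N₀ := hNaesm.stronglyMeasurable_mk
  have hN₀ : ∀ᵐ x ∂(volume : Measure ℝ), x ∈ Ioi (0:ℝ) → N x = N₀ x :=
    ae_imp_of_ae_restrict hNaesm.ae_eq_mk
  have hN₀loc : LocInt N₀ := fun T hT =>
    (hNloc T hT).congr (ae_restrict_of_ae_restrict_of_subset Ioc_subset_Ioi_self hNaesm.ae_eq_mk)
  -- measurable representative of z'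
  have hz'aesm : AEStronglyMeasurable z' (volume.restrict (Ioi (0:ℝ))) := by
    rw [hIoiUnion, aestronglyMeasurable_iUnion_iff]
    intro k
    exact (hz'loc (k + 1) (by positivity)).aestronglyMeasurable
  set z₁ : ℝ → ℝ := hz'aesm.mk z' with hz₁def
  have hz₁m : StronglyMeasurable z₁ := hz'aesm.stronglyMeasurable_mk
  have hz₁ : ∀ᵐ x ∂(volume : Measure ℝ), x ∈ Ioi (0:ℝ) → z' x = z₁ x :=
    ae_imp_of_ae_restrict hz'aesm.ae_eq_mk
  have hz₁loc : LocInt z₁ := fun T hT =>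
    (hz'loc T hT).congr (ae_restrict_of_ae_restrict_of_subset Ioc_subset_Ioi_self hz'aesm.ae_eq_mk)
  -- continuity of z on [0, ∞)
  have hzc : ContinuousOn z (Ici 0) := by
    intro t₀ ht₀
    have ht₀' : (0:ℝ) ≤ t₀ := ht₀
    have hT : (0:ℝ) < t₀ + 1 := by linarith
    have hprim : ContinuousOn (fun x => ∫ s in Ioc (0:ℝ) x, z' s) (Icc 0 (t₀ + 1)) :=
      intervalIntegral.continuousOn_primitive
        ((hz'loc (t₀ + 1) hT).congr_set_ae Ioc_ae_eq_Icc.symm)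
    have hzeq : EqOn z (fun x => 1 + ∫ s in Ioc (0:ℝ) x, z' s) (Icc 0 (t₀ + 1)) := by
      intro x hx
      rw [hrep x hx.1, intervalIntegral.integral_of_le hx.1]
    have hcc : ContinuousOn z (Icc 0 (t₀ + 1)) := (continuousOn_const.add hprim).congr hzeq
    apply (hcc t₀ ⟨ht₀', by linarith⟩).mono_of_mem_nhdsWithin
    apply Filter.mem_of_superset
      (Filter.inter_mem self_mem_nhdsWithin
        (mem_nhdsWithin_of_mem_nhds (Iio_mem_nhds (by linarith : t₀ < t₀ + 1))))
    rintro x ⟨hx1, hx2⟩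
    exact ⟨hx1, le_of_lt hx2⟩
  -- global continuous versions
  set zh : ℝ → ℝ := fun x => z (max x 0) with hzhdef
  have hzhc : Continuous zh :=
    hzc.comp_continuous (continuous_id.max continuous_const) (fun x => le_max_right x 0)
  have hzheq : ∀ x : ℝ, 0 ≤ x → zh x = z x := by
    intro x hx; rw [hzhdef]; simp only [max_eq_left hx]
  have hfc : Continuous f := by
    have : f = fun t => ∫ s in (0:ℝ)..t, g s := funext hf
    rw [this]
    exact intervalIntegral.continuous_primitive (fun a b => hg.intervalIntegrable a b) 0
  -- w
  set w₀ : ℝ → ℝ := fun t => ∫ x in (0:ℝ)..t, N₀ x * f (t - x) with hw₀def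
  have hw₀c : ContinuousOn w₀ (Ici 0) := conv_cont hN₀m hN₀loc hfc
  set wh : ℝ → ℝ := fun s => w₀ (max s 0) with hwhdef
  have hwhc : Continuous wh :=
    hw₀c.comp_continuous (continuous_id.max continuous_const) (fun x => le_max_right x 0)
  have hwheq : ∀ s : ℝ, 0 ≤ s → wh s = w₀ s := by
    intro s hs; rw [hwhdef]; simp only [max_eq_left hs]
  have idA : ∀ s : ℝ, 0 ≤ s → (∫ r in (0:ℝ)..s, N (s - r) * f r) = wh s := by
    intro s hs
    rw [integral_reflect_congr hN₀ f hs, flip_conv N₀ f s, hwheq s hs]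
  -- q
  set q₀ : ℝ → ℝ := fun x => ∫ y in (0:ℝ)..x, N₀ y * zh (x - y) with hq₀def
  have hq₀c : ContinuousOn q₀ (Ici 0) := conv_cont hN₀m hN₀loc hzhc
  set qh : ℝ → ℝ := fun x => q₀ (max x 0) with hqhdef
  have hqhc : Continuous qh :=
    hq₀c.comp_continuous (continuous_id.max continuous_const) (fun x => le_max_right x 0)
  have hqheq : ∀ x : ℝ, 0 ≤ x → qh x = q₀ x := by
    intro x hx; rw [hqhdef]; simp only [max_eq_left hx]
  have idB : ∀ x : ℝ, 0 ≤ x → (∫ s in (0:ℝ)..x, N (x - s) * z s) = qh x := by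
    intro x hx
    rw [integral_reflect_congr hN₀ z hx]
    have e1 : ∫ s in (0:ℝ)..x, N₀ (x - s) * z s = ∫ s in (0:ℝ)..x, N₀ (x - s) * zh s := by
      apply intervalIntegral.integral_congr
      intro s hs
      rw [uIcc_of_le hx] at hs
      show N₀ (x - s) * z s = N₀ (x - s) * zh s
      rw [hzheq s hs.1]
    rw [e1, flip_conv N₀ zh x, hqheq x hx]
  -- a.e. identity for z'
  have hz'q : ∀ᵐ x ∂(volume : Measure ℝ), x ∈ Ioi (0:ℝ) →
      z' x = -(n : ℝ) ^ 2 * qh x := by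
    filter_upwards [ae_imp_of_ae_restrict heqz] with x hx hmem
    rw [hx hmem, idB x (le_of_lt hmem)]
  have hz₁q : ∀ᵐ x ∂(volume : Measure ℝ), x ∈ Ioi (0:ℝ) →
      z₁ x = -(n : ℝ) ^ 2 * qh x := by
    filter_upwards [hz'q, hz₁] with x h1 h2 hmem
    rw [← h2 hmem, h1 hmem]
  -- C
  set C : ℝ → ℝ := fun t => ∫ r in (0:ℝ)..t, z₁ (t - r) * wh r with hCdef
  have hCc : ContinuousOn C (Ici 0) := by
    apply (conv_cont hz₁m hz₁loc hwhc).congr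
    intro t _
    exact flip_conv z₁ wh t
  -- W (inner convolution z * w)
  set Wc : ℝ → ℝ := fun s => ∫ x in (0:ℝ)..s, zh x * wh (s - x) with hWcdef
  have hWcC : ContinuousOn Wc (Ici 0) := conv_cont hzhc.stronglyMeasurable (cont_locint hzhc) hwhc
  set Wh : ℝ → ℝ := fun s => Wc (max s 0) with hWhdef
  have hWhc : Continuous Wh :=
    hWcC.comp_continuous (continuous_id.max continuous_const) (fun x => le_max_right x 0)
  have hWheq : ∀ s : ℝ, 0 ≤ s → Wh s = Wc s := by
    intro s hs; rw [hWhdef]; simp only [max_eq_left hs]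
  have hθs : ∀ s : ℝ, 0 ≤ s → θ s = ξ * z s + n * Wh s := by
    intro s hs
    rw [hθ s]
    congr 1
    congr 1
    have e1 : ∫ x in (0:ℝ)..s, z (s - x) * ∫ r in (0:ℝ)..x, N (x - r) * f r
        = ∫ x in (0:ℝ)..s, zh (s - x) * wh x := by
      apply intervalIntegral.integral_congr
      intro x hx
      rw [uIcc_of_le hs] at hx
      show z (s - x) * (∫ r in (0:ℝ)..x, N (x - r) * f r) = zh (s - x) * wh x
      rw [idA x hx.1, hzheq (s - x) (by linarith [hx.2])]
    rw [e1, flip_conv zh wh s, hWheq s hs]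
  -- the candidate derivative
  refine ⟨by rw [hθ 0, hz0, intervalIntegral.integral_same]; ring,
    fun t => ξ * z' t + (n : ℝ) * wh t + (n : ℝ) * C t, ?_, ?_, ?_⟩
  · -- integrability
    intro T hT
    apply Integrable.add
    apply Integrable.add
    · exact (hz'loc T hT).const_mul ξ
    · exact (hwhc.integrableOn_Ioc).const_mul _
    · exact (((hCc.mono Icc_subset_Ici_self).integrableOn_Icc).mono_set
        Ioc_subset_Icc_self).const_mul _
  · -- fundamental theorem representation
    intro t ht
    rcases eq_or_lt_of_le ht with rfl | htpos
    · rw [intervalIntegral.integral_same, hθ 0, hz0, intervalIntegral.integral_same]; ring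
    have hz'ii : IntervalIntegrable z' volume 0 t := by
      rw [intervalIntegrable_iff, uIoc_of_le ht]
      exact hz'loc t htpos
    have hwhii : IntervalIntegrable wh volume 0 t := hwhc.intervalIntegrable 0 t
    have hCii : IntervalIntegrable C volume 0 t := by
      apply ContinuousOn.intervalIntegrable
      apply hCc.mono
      rw [uIcc_of_le ht]
      exact Icc_subset_Ici_self
    rw [intervalIntegral.integral_add (((hz'ii.const_mul ξ)).add (hwhii.const_mul _))
        (hCii.const_mul _),
      intervalIntegral.integral_add (hz'ii.const_mul ξ) (hwhii.const_mul _),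
      intervalIntegral.integral_const_mul, intervalIntegral.integral_const_mul,
      intervalIntegral.integral_const_mul]
    have hCint : ∫ s in (0:ℝ)..t, C s
        = ∫ r in (0:ℝ)..t, (z (t - r) - 1) * wh r := by
      rw [hCdef]
      rw [fub' hz₁m hz₁loc hwhc ht]
      apply intervalIntegral.integral_congr
      intro r hr
      rw [uIcc_of_le ht] at hr
      have htr : (0:ℝ) ≤ t - r := by linarith [hr.2]
      show (∫ y in (0:ℝ)..(t - r), z₁ y) * wh r = (z (t - r) - 1) * wh r
      congr 1
      have e1 : ∫ y in (0:ℝ)..(t - r), z₁ y = ∫ y in (0:ℝ)..(t - r), z' y := by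
        apply intervalIntegral.integral_congr_ae
        filter_upwards [hz₁] with y hy hmem
        rw [uIoc_of_le htr] at hmem
        exact (hy hmem.1).symm
      rw [e1, hrep (t - r) htr]
      ring
    rw [hCint]
    have e2 : ∫ r in (0:ℝ)..t, (z (t - r) - 1) * wh r
        = (∫ r in (0:ℝ)..t, zh (t - r) * wh r) - ∫ r in (0:ℝ)..t, wh r := by
      have e3 : ∫ r in (0:ℝ)..t, (z (t - r) - 1) * wh r
          = ∫ r in (0:ℝ)..t, (zh (t - r) * wh r - wh r) := by
        apply intervalIntegral.integral_congr
        intro r hr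
        rw [uIcc_of_le ht] at hr
        show (z (t - r) - 1) * wh r = zh (t - r) * wh r - wh r
        rw [hzheq (t - r) (by linarith [hr.2])]
        ring
      have hzw : IntervalIntegrable (fun r => zh (t - r) * wh r) volume 0 t := by
        apply Continuous.intervalIntegrable
        exact (hzhc.comp (continuous_const.sub continuous_id)).mul hwhc
      rw [e3, intervalIntegral.integral_sub hzw hwhii]
    rw [e2, hθs t ht, hrep t ht]
    have e4 : Wh t = ∫ r in (0:ℝ)..t, zh (t - r) * wh r := by
      rw [hWheq t ht, hWcdef]
      exact (flip_conv zh wh t).symm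
    rw [e4]
    ring
  · -- a.e. identity
    filter_upwards [ae_restrict_of_ae hz'q, ae_restrict_of_ae hz₁q, ae_restrict_of_ae hN₀,
      ae_restrict_mem measurableSet_Ioi] with t h1 h2 h3 htmem
    have htpos : (0:ℝ) < t := htmem
    -- left-hand side pieces
    have hCval : C t = -(n:ℝ) ^ 2 * ∫ r in (0:ℝ)..t, qh (t - r) * wh r := by
      show (∫ r in (0:ℝ)..t, z₁ (t - r) * wh r) = _
      rw [integral_reflect_congr hz₁q wh htpos.le]
      have e1 : ∫ r in (0:ℝ)..t, (-(n:ℝ) ^ 2 * qh (t - r)) * wh r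
          = ∫ r in (0:ℝ)..t, -(n:ℝ) ^ 2 * (qh (t - r) * wh r) := by
        apply intervalIntegral.integral_congr
        intro r _
        show (-(n:ℝ) ^ 2 * qh (t - r)) * wh r = -(n:ℝ) ^ 2 * (qh (t - r) * wh r)
        ring
      rw [e1, intervalIntegral.integral_const_mul]
    -- right-hand side pieces
    have hNf : ∫ s in (0:ℝ)..t, N (t - s) * f s = wh t := idA t htpos.le
    have hNθ : ∫ s in (0:ℝ)..t, N (t - s) * θ s
        = ξ * qh t + (n:ℝ) * ∫ r in (0:ℝ)..t, qh (t - r) * wh r := by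
      rw [integral_reflect_congr hN₀ θ htpos.le]
      have e1 : ∫ s in (0:ℝ)..t, N₀ (t - s) * θ s
          = ∫ s in (0:ℝ)..t, (ξ * (N₀ (t - s) * zh s) + (n:ℝ) * (N₀ (t - s) * Wh s)) := by
        apply intervalIntegral.integral_congr
        intro s hs
        rw [uIcc_of_le htpos.le] at hs
        show N₀ (t - s) * θ s = ξ * (N₀ (t - s) * zh s) + (n:ℝ) * (N₀ (t - s) * Wh s)
        rw [hθs s hs.1, ← hzheq s hs.1]
        ring
      rw [e1]
      have hint1 : IntervalIntegrable (fun s => N₀ (t - s) * zh s) volume 0 t := by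
        rw [intervalIntegrable_iff, uIoc_of_le htpos.le]
        exact reflect_mul_cont hN₀m hN₀loc hzhc htpos
      have hint2 : IntervalIntegrable (fun s => N₀ (t - s) * Wh s) volume 0 t := by
        rw [intervalIntegrable_iff, uIoc_of_le htpos.le]
        exact reflect_mul_cont hN₀m hN₀loc hWhc htpos
      rw [intervalIntegral.integral_add (hint1.const_mul ξ) (hint2.const_mul _),
        intervalIntegral.integral_const_mul, intervalIntegral.integral_const_mul]
      congr 1
      · -- ξ * ∫ N₀(t-s) zh s = ξ * qh t
        congr 1
        rw [flip_conv N₀ zh t, hqheq t htpos.le]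
      · -- n * ∫ N₀(t-s) Wh s = n * ∫ qh(t-r) wh r
        congr 1
        have e2 : ∫ s in (0:ℝ)..t, N₀ (t - s) * Wh s
            = ∫ s in (0:ℝ)..t, N₀ (t - s) * (∫ r in (0:ℝ)..s, zh (s - r) * wh r) := by
          apply intervalIntegral.integral_congr
          intro s hs
          rw [uIcc_of_le htpos.le] at hs
          show N₀ (t - s) * Wh s = N₀ (t - s) * (∫ r in (0:ℝ)..s, zh (s - r) * wh r)
          rw [hWheq s hs.1, hWcdef]
          congr 1
          exact (flip_conv zh wh s).symm
        rw [e2, ← assoc_conv hN₀m hN₀loc hzhc hwhc htpos.le]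
        apply intervalIntegral.integral_congr
        intro r hr
        rw [uIcc_of_le htpos.le] at hr
        show (∫ y in (0:ℝ)..(t - r), N₀ y * zh (t - r - y)) * wh r = qh (t - r) * wh r
        congr 1
        rw [hqheq (t - r) (by linarith [hr.2])]
    rw [hCval, hNf, hNθ, h1 htmem]
    ring
end
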